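/- arXiv:2303.07712 — 15 statements merged into one kernel-verified Lean document; each statement's English description precedes it below -/
import Mathlib

section
/- The dilatation A[{M_i/a_i}_{i∈I}] is the zero ring if and only if a^ν = 0 in A for some ν ∈ ⊕_{i∈I} ℕ. -/
open scoped TensorProduct

noncomputable section

variable {A : Type*} [CommRing A] {I : Type*}

/-- The multiplicative submonoid generated by the elements `a_i` of the multi-center. -/
def dilSubmonoid (a : I → A) : Submonoid A := Submonoid.closure (Set.range a)

lemma a_mem_dilSubmonoid (a : I → A) (i : I) : a i ∈ dilSubmonoid a :=
  Submonoid.subset_closure ⟨i, rfl⟩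

/-- `a^ν` for `ν ∈ ⊕_{i∈I} ℕ`. -/
def apow (a : I → A) (ν : I →₀ ℕ) : A := ν.prod fun i n => a i ^ n

lemma apow_mem (a : I → A) (ν : I →₀ ℕ) : apow a ν ∈ dilSubmonoid a :=
  Submonoid.prod_mem _ fun i _ => pow_mem (a_mem_dilSubmonoid a i) _

/-- The product ideal `L^ν = ∏_i (M_i + (a_i))^{ν_i}`. -/
def Lpow (M : I → Ideal A) (a : I → A) (ν : I →₀ ℕ) : Ideal A :=
  ν.prod fun i n => (M i + Ideal.span {a i}) ^ n

/-- The fraction `m / a_i` in the localization at the submonoid generated by the `a_i`. -/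
def dilFrac (a : I → A) (i : I) (m : A) : Localization (dilSubmonoid a) :=
  Localization.mk m ⟨a i, a_mem_dilSubmonoid a i⟩

/-- The multi-centered dilatation `A[{M_i/a_i}]`, realized as the sub-`A`-algebra of the
localization `S⁻¹A` generated by the fractions `m / a_i` with `m ∈ M_i`. -/
def dilatation (M : I → Ideal A) (a : I → A) :
    Subalgebra A (Localization (dilSubmonoid a)) :=
  Algebra.adjoin A (⋃ i, dilFrac a i '' (M i))

lemma mem_dilSubmonoid_iff (a : I → A) (x : A) :
    x ∈ dilSubmonoid a ↔ ∃ ν : I →₀ ℕ, apow a ν = x := by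
  constructor
  · intro hx
    induction hx using Submonoid.closure_induction with
    | mem y hy =>
      obtain ⟨i, rfl⟩ := hy
      exact ⟨Finsupp.single i 1, by simp [apow, Finsupp.prod_single_index]⟩
    | one => exact ⟨0, by simp [apow]⟩
    | mul y z _ _ hy hz =>
      obtain ⟨ν, rfl⟩ := hy
      obtain ⟨μ, rfl⟩ := hz
      refine ⟨ν + μ, ?_⟩
      exact Finsupp.prod_add_index' (fun i => pow_zero _) (fun i m n => pow_add _ _ _)
  · rintro ⟨ν, rfl⟩
    exact apow_mem a ν

/-- the dilatation is the zero ring iff `a^ν = 0` for some `ν ∈ ⊕_I ℕ`. -/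
theorem stmt1 (M : I → Ideal A) (a : I → A) :
    Subsingleton ↥(dilatation M a) ↔ ∃ ν : I →₀ ℕ, apow a ν = 0 := by
  rw [← mem_dilSubmonoid_iff]
  constructor
  · intro h
    have h10 : (1 : dilatation M a) = 0 := Subsingleton.elim _ _
    have h10' : (1 : Localization (dilSubmonoid a)) = 0 := congrArg Subtype.val h10
    have : (Localization.mk (1 : A) 1 : Localization (dilSubmonoid a)) = Localization.mk 0 1 := by
      rw [Localization.mk_one_eq_algebraMap, map_one, Localization.mk_zero]
      exact h10'
    rw [Localization.mk_eq_mk_iff, Localization.r_iff_exists] at this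
    obtain ⟨c, hc⟩ := this
    simp only [OneMemClass.coe_one, mul_one, mul_zero] at hc
    exact hc ▸ c.2
  · intro h0
    have : Subsingleton (Localization (dilSubmonoid a)) :=
      IsLocalization.subsingleton h0
    exact ⟨fun x y => Subtype.ext (Subsingleton.elim _ _)⟩
end
end

section
/- If A is an integral domain and a_i ≠ 0 for all i ∈ I, then the dilatation A[{M_i/a_i}_{i∈I}] is an integral domain. -/
open scoped TensorProduct

noncomputable section

variable {A : Type*} [CommRing A] {I : Type*}

/-- if `A` is a domain and all `a_i ≠ 0`, the dilatation is a domain. -/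
theorem stmt2 [IsDomain A] (M : I → Ideal A) (a : I → A) (ha : ∀ i, a i ≠ 0) :
    IsDomain ↥(dilatation M a) := by
  have hle : dilSubmonoid a ≤ nonZeroDivisors A := by
    rw [dilSubmonoid, Submonoid.closure_le]
    rintro _ ⟨i, rfl⟩
    exact mem_nonZeroDivisors_of_ne_zero (ha i)
  have : IsDomain (Localization (dilSubmonoid a)) :=
    IsLocalization.isDomain_localization hle
  exact Subring.instIsDomainSubtypeMem (dilatation M a).toSubring
end
end

section
/- If A is a reduced ring, then the dilatation A[{M_i/a_i}_{i∈I}] is reduced. -/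
open scoped TensorProduct

noncomputable section

variable {A : Type*} [CommRing A] {I : Type*}

/-- if `A` is reduced then the dilatation is reduced. -/
theorem stmt3 [IsReduced A] (M : I → Ideal A) (a : I → A) :
    IsReduced ↥(dilatation M a) :=
  isReduced_of_injective (dilatation M a).val Subtype.val_injective
end
end

section
/- For every ν ∈ ⊕_{i∈I} ℕ, the image of a^ν under the canonical map A → A[{M_i/a_i}_{i∈I}] is a non-zero-divisor. -/
open scoped TensorProduct

noncomputable section

variable {A : Type*} [CommRing A] {I : Type*}

/-- for every `ν`, the image of `a^ν` in the dilatation is a non-zero-divisor. -/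
theorem stmt4 (M : I → Ideal A) (a : I → A) (ν : I →₀ ℕ) :
    algebraMap A ↥(dilatation M a) (apow a ν) ∈ nonZeroDivisors ↥(dilatation M a) := by
  rw [mem_nonZeroDivisors_iff_right]
  intro x hx
  have hunit : IsUnit (algebraMap A (Localization (dilSubmonoid a)) (apow a ν)) :=
    IsLocalization.map_units (Localization (dilSubmonoid a)) ⟨apow a ν, apow_mem a ν⟩
  have hx' : (x : Localization (dilSubmonoid a)) *
      algebraMap A (Localization (dilSubmonoid a)) (apow a ν) = 0 := by
    have := congrArg (Subtype.val) hx
    simpa [Subalgebra.algebraMap_eq] using this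
  have : (x : Localization (dilSubmonoid a)) = 0 := by
    rcases hunit with ⟨u, hu⟩
    have := congrArg (· * (↑u⁻¹ : Localization (dilSubmonoid a))) hx'
    simpa [← hu, mul_assoc] using this
  exact Subtype.ext this
end
end

section
/- If M_i = A for all i ∈ I, then the dilatation A[{M_i/a_i}_{i∈I}] is canonically isomorphic as an A-algebra to the localization S⁻¹A, where S is the multiplicative subset of A generated by {a_i}_{i∈I}. -/
open scoped TensorProduct

noncomputable section

variable {A : Type*} [CommRing A] {I : Type*}

/-- if `M_i = A` for all `i`, the dilatation is canonically isomorphic as an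
`A`-algebra to the localization `S⁻¹A`, `S` the multiplicative subset generated by the `a_i`. -/
theorem stmt5 (M : I → Ideal A) (a : I → A) (hM : ∀ i, M i = ⊤) :
    Nonempty (↥(dilatation M a) ≃ₐ[A] Localization (dilSubmonoid a)) := by
  have key : ∀ s : A, s ∈ dilSubmonoid a →
      ∀ h : s ∈ dilSubmonoid a, Localization.mk 1 ⟨s, h⟩ ∈ dilatation M a := by
    intro s hs
    refine Submonoid.closure_induction (motive := fun s _ => ∀ h : s ∈ dilSubmonoid a,
      Localization.mk 1 ⟨s, h⟩ ∈ dilatation M a) ?_ ?_ ?_ hs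
    · rintro x ⟨i, rfl⟩ h
      apply Algebra.subset_adjoin
      exact Set.mem_iUnion.2 ⟨i, ⟨1, by simp [hM i], rfl⟩⟩
    · intro h
      have : Localization.mk (1:A) ⟨1, h⟩ = 1 := by
        exact Localization.mk_self ⟨1, h⟩
      rw [this]; exact Subalgebra.one_mem _
    · intro x y hx hy ihx ihy h
      have : Localization.mk (1:A) ⟨x*y, h⟩ =
          Localization.mk 1 ⟨x, hx⟩ * Localization.mk 1 ⟨y, hy⟩ := by
        rw [Localization.mk_mul]; simp; rfl
      rw [this]; exact Subalgebra.mul_mem _ (ihx hx) (ihy hy)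
  have htop : dilatation M a = ⊤ := by
    rw [eq_top_iff]
    rintro x -
    induction x using Localization.induction_on with
    | H p =>
    obtain ⟨r, s, hs⟩ := p
    have : Localization.mk r ⟨s, hs⟩ = r • Localization.mk 1 ⟨s, hs⟩ := by
      rw [Localization.smul_mk]; simp
    rw [this]
    exact Subalgebra.smul_mem _ (key s hs hs) r
  exact ⟨(Subalgebra.equivOfEq _ _ htop).trans Subalgebra.topEquiv⟩
end
end

section
/- A morphism of commutative rings f : A → B is isomorphic as an A-algebra to a multi-centered dilatation of A if and only if there exists a multiplicative subset S ⊆ A and a sub-A-algebra C of S⁻¹A with B ≅ C as A-algebras. -/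
open scoped TensorProduct

noncomputable section

variable {A : Type*} [CommRing A] {I : Type*}

universe u v

/-- an `A`-algebra `B` is isomorphic to a multi-centered dilatation of `A` iff
it is isomorphic to a sub-`A`-algebra of a localization `S⁻¹A`. -/
theorem stmt7 {A : Type u} [CommRing A] {B : Type v} [CommRing B] [Algebra A B] :
    (∃ (I : Type u) (M : I → Ideal A) (a : I → A),
        Nonempty (B ≃ₐ[A] ↥(dilatation M a))) ↔
    (∃ (S : Submonoid A) (C : Subalgebra A (Localization S)),
        Nonempty (B ≃ₐ[A] ↥C)) := by
  constructor
  · rintro ⟨I, M, a, ⟨e⟩⟩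
    exact ⟨dilSubmonoid a, dilatation M a, ⟨e⟩⟩
  · rintro ⟨S, C, ⟨e⟩⟩
    set I : Type u := {p : A × S // (Localization.mk p.1 p.2 : Localization S) ∈ C} with hI
    set a : I → A := fun p => (p.1.2 : A) with ha
    set M : I → Ideal A := fun p => Ideal.span {p.1.1} with hM
    have hrange : Set.range a = (S : Set A) := by
      apply Set.Subset.antisymm
      · rintro _ ⟨p, rfl⟩; exact p.1.2.2
      · intro s hs
        refine ⟨⟨(s, ⟨s, hs⟩), ?_⟩, rfl⟩
        rw [Localization.mk_self ⟨s, hs⟩]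
        exact C.one_mem
    have hS : dilSubmonoid a = S := by
      rw [dilSubmonoid, hrange, Submonoid.closure_eq]
    haveI hloc : IsLocalization (dilSubmonoid a) (Localization S) := by
      rw [hS]; exact Localization.isLocalization
    let f : Localization (dilSubmonoid a) ≃ₐ[A] Localization S :=
      IsLocalization.algEquiv (dilSubmonoid a) _ _
    have key : ∀ (x t : A) (ht : t ∈ dilSubmonoid a),
        f (Localization.mk x ⟨t, ht⟩) = Localization.mk x ⟨t, hS ▸ ht⟩ := by
      intro x t ht
      have hu : IsUnit (algebraMap A (Localization S) t) :=
        IsLocalization.map_units (M := S) _ ⟨t, hS ▸ ht⟩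
      apply hu.mul_left_cancel
      have h1 : (Localization.mk x ⟨t, ht⟩ : Localization (dilSubmonoid a)) *
          algebraMap A _ t = algebraMap A _ x := by
        rw [← Localization.mk_one_eq_algebraMap, ← Localization.mk_one_eq_algebraMap,
          Localization.mk_mul, mul_one]
        rw [Localization.mk_eq_mk_iff, Localization.r_iff_exists]
        exact ⟨1, by push_cast; ring⟩
      have h2 : (Localization.mk x ⟨t, hS ▸ ht⟩ : Localization S) *
          algebraMap A _ t = algebraMap A _ x := by
        rw [← Localization.mk_one_eq_algebraMap, ← Localization.mk_one_eq_algebraMap,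
          Localization.mk_mul, mul_one]
        rw [Localization.mk_eq_mk_iff, Localization.r_iff_exists]
        exact ⟨1, by push_cast; ring⟩
      calc algebraMap A (Localization S) t * f (Localization.mk x ⟨t, ht⟩)
          = f (Localization.mk x ⟨t, ht⟩ * algebraMap A _ t) := by
            rw [map_mul, AlgEquiv.commutes, mul_comm]
        _ = algebraMap A _ x := by rw [h1, AlgEquiv.commutes]
        _ = algebraMap A (Localization S) t * Localization.mk x ⟨t, hS ▸ ht⟩ := by
            rw [mul_comm, h2]
    have hmap : (dilatation M a).map (f : Localization (dilSubmonoid a) →ₐ[A] Localization S)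
        = C := by
      rw [dilatation, AlgHom.map_adjoin]
      apply le_antisymm
      · rw [Algebra.adjoin_le_iff]
        rintro _ ⟨y, hy, rfl⟩
        simp only [Set.mem_iUnion] at hy
        obtain ⟨p, m', hm', rfl⟩ := hy
        simp only [SetLike.mem_coe, hM, Ideal.mem_span_singleton] at hm'
        obtain ⟨r, rfl⟩ := hm'
        rw [dilFrac, AlgEquiv.coe_toAlgHom, key]
        have : (Localization.mk (p.1.1 * r) ⟨a p, hS ▸ a_mem_dilSubmonoid a p⟩ :
            Localization S) = Localization.mk p.1.1 ⟨a p, hS ▸ a_mem_dilSubmonoid a p⟩ *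
            algebraMap A _ r := by
          rw [← Localization.mk_one_eq_algebraMap, Localization.mk_mul, mul_one]
        rw [this]
        have hp : (Localization.mk p.1.1 ⟨a p, hS ▸ a_mem_dilSubmonoid a p⟩ :
            Localization S) ∈ C := by
          have := p.2
          convert this using 2
        exact C.mul_mem hp (C.algebraMap_mem r)
      · intro x hx
        induction x using Localization.induction_on with
        | H d =>
          obtain ⟨m, s⟩ := d
          set p : I := ⟨(m, s), hx⟩ with hp
          apply Algebra.subset_adjoin
          refine ⟨dilFrac a p m, ?_, ?_⟩
          · exact Set.mem_iUnion.2 ⟨p, ⟨m, Ideal.mem_span_singleton_self m, rfl⟩⟩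
          · rw [dilFrac, AlgEquiv.coe_toAlgHom, key]
    exact ⟨I, M, a, ⟨e.trans ((Subalgebra.equivOfEq _ _ hmap.symm).trans
      (f.subalgebraMap (dilatation M a)).symm)⟩⟩
end
end

section
/- If c ∈ A is a non-zero-divisor, then the image of c under the canonical map A → A[{M_i/a_i}_{i∈I}] is a non-zero-divisor. -/
open scoped TensorProduct

noncomputable section

variable {A : Type*} [CommRing A] {I : Type*}

/-- the image of a non-zero-divisor of `A` in the dilatation is a
non-zero-divisor. -/
theorem stmt8 (M : I → Ideal A) (a : I → A) (c : A) (hc : c ∈ nonZeroDivisors A) :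
    algebraMap A ↥(dilatation M a) c ∈ nonZeroDivisors ↥(dilatation M a) := by
  rw [mem_nonZeroDivisors_iff_right]
  intro x hx
  have hloc : algebraMap A (Localization (dilSubmonoid a)) c ∈
      nonZeroDivisors (Localization (dilSubmonoid a)) :=
    IsLocalization.nonZeroDivisors_le_comap (dilSubmonoid a)
      (Localization (dilSubmonoid a)) hc
  have h0 : (x : Localization (dilSubmonoid a)) *
      algebraMap A (Localization (dilSubmonoid a)) c = 0 := by
    have := congrArg (Subalgebra.val (dilatation M a)) hx
    simpa using this
  exact Subtype.ext (mem_nonZeroDivisors_iff_right.mp hloc _ h0)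
end
end

section
/- Let K ⊆ I and J = I \ K, and let φ : A[{M_i/a_i}_{i∈K}] → A[{M_i/a_i}_{i∈I}] be the canonical A-algebra morphism. If M_j ⊆ (a_j) for all j ∈ J then φ is surjective; if a_j is a non-zero-divisor in A for all j ∈ J then φ is injective. -/
open scoped TensorProduct

noncomputable section

variable {A : Type*} [CommRing A] {I : Type*}

set_option synthInstance.maxHeartbeats 1000000
set_option maxHeartbeats 1000000


/-- The canonical map between localizations induced by enlarging the set of centers. -/
def locMapK (a : I → A) (K : Set I) :
    Localization (dilSubmonoid fun k : K => a k) →+* Localization (dilSubmonoid a) :=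
  IsLocalization.map (M := dilSubmonoid fun k : K => a k) (T := dilSubmonoid a)
    (Localization (dilSubmonoid a)) (RingHom.id A)
    (Submonoid.closure_le.mpr (by
      rintro x ⟨k, rfl⟩
      exact a_mem_dilSubmonoid a k))


lemma dilSubmonoid_subset (a : I → A) (K : Set I) :
    dilSubmonoid (fun k : K => a k) ≤ dilSubmonoid a :=
  Submonoid.closure_le.mpr (by rintro x ⟨k, rfl⟩; exact a_mem_dilSubmonoid a k)

lemma locMapK_mk (a : I → A) (K : Set I) (m : A) (s : dilSubmonoid (fun k : K => a k)) :
    locMapK a K (Localization.mk m s) =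
      Localization.mk m ⟨s, dilSubmonoid_subset a K s.2⟩ := by
  rw [Localization.mk_eq_mk', Localization.mk_eq_mk']
  exact IsLocalization.map_mk' (M := dilSubmonoid fun k : K => a k) (T := dilSubmonoid a)
    (Q := Localization (dilSubmonoid a)) (S := Localization (dilSubmonoid fun k : K => a k)) (g := RingHom.id A) _ m s

/-- `locMapK` as an `A`-algebra morphism. -/
def locMapKAlg (a : I → A) (K : Set I) :
    Localization (dilSubmonoid fun k : K => a k) →ₐ[A] Localization (dilSubmonoid a) :=
  { locMapK a K with
    commutes' := fun c => by
      rw [← Localization.mk_one_eq_algebraMap, ← Localization.mk_one_eq_algebraMap]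
      exact locMapK_mk a K c 1 }

lemma cancel_aux (a : I → A) (K : Set I)
    (h : ∀ j ∉ K, a j ∈ nonZeroDivisors A)
    (t : A) (ht : t ∈ dilSubmonoid a) :
    ∀ m : A, t * m = 0 → ∃ u ∈ dilSubmonoid (fun k : K => a k), u * m = 0 := by
  induction ht using Submonoid.closure_induction with
  | mem x hx =>
    obtain ⟨i, rfl⟩ := hx
    intro m hm
    by_cases hi : i ∈ K
    · exact ⟨a i, a_mem_dilSubmonoid (fun k : K => a k) ⟨i, hi⟩, hm⟩
    · exact ⟨1, one_mem _, by rw [one_mul, mem_nonZeroDivisors_iff_right.mp (h i hi) m (by rwa [mul_comm] at hm)]⟩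
  | one => intro m hm; exact ⟨1, one_mem _, by rwa [one_mul] at hm ⊢⟩
  | mul x y hx hy ihx ihy =>
    intro m hm
    obtain ⟨u₁, hu₁, hu₁m⟩ := ihx (y * m) (by rwa [← mul_assoc])
    obtain ⟨u₂, hu₂, hu₂m⟩ := ihy (u₁ * m) (by
      rw [← mul_assoc, mul_comm y u₁, mul_assoc]; exact hu₁m)
    exact ⟨u₂ * u₁, mul_mem hu₂ hu₁, by rwa [mul_assoc]⟩

lemma locMapK_injective (a : I → A) (K : Set I)
    (h : ∀ j ∉ K, a j ∈ nonZeroDivisors A) :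
    Function.Injective (locMapK a K) := by
  rw [injective_iff_map_eq_zero]
  intro x
  refine Localization.induction_on x ?_
  rintro ⟨m, s⟩ hx
  rw [locMapK_mk, Localization.mk_eq_mk', IsLocalization.mk'_eq_zero_iff] at hx
  obtain ⟨⟨t, ht⟩, htm⟩ := hx
  obtain ⟨u, hu, hum⟩ := cancel_aux a K h t ht m htm
  rw [Localization.mk_eq_mk', IsLocalization.mk'_eq_zero_iff]
  exact ⟨⟨u, hu⟩, hum⟩
/-- for `K ⊆ I`, the canonical `A`-algebra morphism
`φ : A[{M_i/a_i}_{i∈K}] → A[{M_i/a_i}_{i∈I}]` exists; it is surjective if `M_j ⊆ (a_j)` for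
all `j ∈ I \ K`, and injective if each `a_j`, `j ∈ I \ K`, is a non-zero-divisor in `A`. -/
theorem stmt9 (M : I → Ideal A) (a : I → A) (K : Set I) :
    ∃ φ : ↥(dilatation (fun k : K => M k) (fun k : K => a k)) →ₐ[A] ↥(dilatation M a),
      (∀ x, ((φ x : Localization (dilSubmonoid a)))
          = locMapK a K ((x : Localization (dilSubmonoid fun k : K => a k)))) ∧
      ((∀ j ∉ K, M j ≤ Ideal.span {a j}) → Function.Surjective φ) ∧
      ((∀ j ∉ K, a j ∈ nonZeroDivisors A) → Function.Injective φ) := by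
  have hmaps : ∀ x ∈ dilatation (fun k : K => M k) (fun k : K => a k),
      locMapK a K x ∈ dilatation M a := by
    intro x hx
    refine Algebra.adjoin_le (S := (dilatation M a).comap (locMapKAlg a K)) ?_ hx
    rintro y ⟨_, ⟨i, rfl⟩, m, hm, rfl⟩
    show locMapK a K _ ∈ dilatation M a
    rw [dilFrac, locMapK_mk]
    exact Algebra.subset_adjoin
      (Set.mem_iUnion.mpr ⟨(i : I), Set.mem_image_of_mem _ hm⟩)
  refine ⟨AlgHom.codRestrict
      ((locMapKAlg a K).comp (dilatation (fun k : K => M k) (fun k : K => a k)).val)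
      (dilatation M a) (fun x => hmaps x x.2), fun x => rfl, ?_, ?_⟩
  · intro hsurj y
    set φ := AlgHom.codRestrict
      ((locMapKAlg a K).comp (dilatation (fun k : K => M k) (fun k : K => a k)).val)
      (dilatation M a) (fun x => hmaps x x.2) with hφ
    have hle : dilatation M a ≤ ((dilatation M a).val.comp φ).range := by
      refine Algebra.adjoin_le ?_
      rintro x ⟨_, ⟨i, rfl⟩, m, hm, rfl⟩
      by_cases hi : i ∈ K
      · refine ⟨⟨dilFrac (fun k : K => a k) ⟨i, hi⟩ m,
          Algebra.subset_adjoin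
            (Set.mem_iUnion.mpr ⟨⟨i, hi⟩, Set.mem_image_of_mem _ hm⟩)⟩, ?_⟩
        exact locMapK_mk a K m ⟨a i, a_mem_dilSubmonoid (fun k : K => a k) ⟨i, hi⟩⟩
      · obtain ⟨c, hc⟩ := Ideal.mem_span_singleton'.mp (hsurj i hi hm)
        refine ⟨algebraMap A _ c, ?_⟩
        show ((φ (algebraMap A _ c) : ↥(dilatation M a)) : Localization (dilSubmonoid a))
          = dilFrac a i m
        rw [AlgHom.commutes]
        have h1 : ((algebraMap A ↥(dilatation M a) c : ↥(dilatation M a))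
            : Localization (dilSubmonoid a)) = algebraMap A _ c := rfl
        rw [h1, ← Localization.mk_one_eq_algebraMap, dilFrac, ← hc]
        rw [show (⟨a i, a_mem_dilSubmonoid a i⟩ : dilSubmonoid a)
            = 1 * ⟨a i, a_mem_dilSubmonoid a i⟩ from (one_mul _).symm,
          ← Localization.mk_mul, Localization.mk_self ⟨a i, a_mem_dilSubmonoid a i⟩,
          mul_one]
    obtain ⟨x, hx⟩ := hle y.2
    exact ⟨x, Subtype.ext hx⟩
  · intro hinj x y hxy
    apply Subtype.ext
    exact locMapK_injective a K hinj (congrArg Subtype.val hxy)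
end
end

section
/- For every ν ∈ ⊕_{i∈I} ℕ, the extended ideal L^ν · A[{M_i/a_i}_{i∈I}] equals the principal ideal a^ν · A[{M_i/a_i}_{i∈I}]. -/
open scoped TensorProduct

noncomputable section

variable {A : Type*} [CommRing A] {I : Type*}

/-- `Ideal.span {·}` as a monoid hom. -/
def spanHom (R : Type*) [CommRing R] : R →* Ideal R where
  toFun x := Ideal.span {x}
  map_one' := by simp [Ideal.one_eq_top]
  map_mul' x y := (Ideal.span_singleton_mul_span_singleton x y).symm

/-- `Ideal.map f` as a monoid hom. -/
def mapHom {R S : Type*} [CommRing R] [CommRing S] (f : R →+* S) : Ideal R →* Ideal S where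
  toFun := Ideal.map f
  map_one' := by rw [Ideal.one_eq_top, Ideal.map_top, Ideal.one_eq_top]
  map_mul' := Ideal.map_mul f

lemma dilFrac_mem (M : I → Ideal A) (a : I → A) {i : I} {m : A} (hm : m ∈ M i) :
    dilFrac a i m ∈ dilatation M a :=
  Algebra.subset_adjoin (Set.mem_iUnion.2 ⟨i, ⟨m, hm, rfl⟩⟩)

lemma map_L_eq (M : I → Ideal A) (a : I → A) (i : I) :
    Ideal.map (algebraMap A ↥(dilatation M a)) (M i + Ideal.span {a i})
      = Ideal.span {algebraMap A ↥(dilatation M a) (a i)} := by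
  set f := algebraMap A ↥(dilatation M a)
  apply le_antisymm
  · rw [Ideal.map_le_iff_le_comap]
    intro x hx
    rw [Submodule.add_eq_sup, Submodule.mem_sup] at hx
    obtain ⟨m, hm, y, hy, rfl⟩ := hx
    rw [Ideal.mem_span_singleton] at hy
    obtain ⟨c, rfl⟩ := hy
    simp only [Ideal.mem_comap, f.map_add, f.map_mul]
    refine Ideal.add_mem _ ?_ (Ideal.mul_mem_right _ _ (Ideal.subset_span rfl))
    rw [Ideal.mem_span_singleton']
    refine ⟨⟨dilFrac a i m, dilFrac_mem M a hm⟩, ?_⟩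
    ext
    show dilFrac a i m * algebraMap A (Localization (dilSubmonoid a)) (a i)
        = algebraMap A (Localization (dilSubmonoid a)) m
    rw [dilFrac, Localization.mk_eq_mk']
    exact IsLocalization.mk'_spec _ m ⟨a i, a_mem_dilSubmonoid a i⟩
  · rw [Ideal.span_le, Set.singleton_subset_iff]
    exact Ideal.mem_map_of_mem f
      (Submodule.mem_sup_right (Ideal.subset_span rfl))

/-- for every `ν`, the extended ideal `L^ν · A[{M_i/a_i}]` equals the principal
ideal generated by the image of `a^ν`. -/
theorem stmt10 (M : I → Ideal A) (a : I → A) (ν : I →₀ ℕ) :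
    Ideal.map (algebraMap A ↥(dilatation M a)) (Lpow M a ν)
      = Ideal.span {algebraMap A ↥(dilatation M a) (apow a ν)} := by
  set f := algebraMap A ↥(dilatation M a) with hf
  rw [Lpow, apow, map_finsuppProd f]
  have : Ideal.map (algebraMap A ↥(dilatation M a)) = mapHom (algebraMap A ↥(dilatation M a)) := rfl
  rw [this, map_finsuppProd]
  have : (Ideal.span {Finsupp.prod ν fun i n => f (a i ^ n)} : Ideal ↥(dilatation M a))
      = spanHom _ (Finsupp.prod ν fun i n => f (a i ^ n)) := rfl
  rw [this, map_finsuppProd]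
  refine Finsupp.prod_congr fun i _ => ?_
  show Ideal.map f ((M i + Ideal.span {a i}) ^ _) = Ideal.span {f (a i ^ _)}
  rw [Ideal.map_pow, map_L_eq M a i, map_pow, Ideal.span_singleton_pow]
end
end

section
/- Universal property of dilatations: if χ : A → B is a ring morphism such that for each i ∈ I, χ(a_i) is a non-zero-divisor in B and χ(a_i)·B = χ(L_i)·B (where L_i = M_i + (a_i)), then there exists a unique A-algebra morphism A[{M_i/a_i}_{i∈I}] → B; it sends the class of l/a^ν to the unique b ∈ B with χ(a^ν)·b = χ(l). -/
open scoped TensorProduct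

noncomputable section

variable {A : Type*} [CommRing A] {I : Type*}

lemma mk_cancel_aux {R : Type*} [CommRing R] {S : Submonoid R} (s : R) (hs : s ∈ S) (l : R) :
    Localization.mk (s * l) ⟨s, hs⟩ = Localization.mk l 1 := by
  rw [Localization.mk_eq_mk_iff]
  exact Localization.r_of_eq (by simp [mul_comm])

/-- universal property: if `χ = algebraMap A B` sends each `a_i` to a
non-zero-divisor generating `χ(L_i)·B`, then there is a unique `A`-algebra morphism
`A[{M_i/a_i}] → B`, and it sends the class of `l/a^ν` to the unique `b` with
`χ(a^ν)·b = χ(l)`. -/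
theorem stmt11 {B : Type*} [CommRing B] [Algebra A B] (M : I → Ideal A) (a : I → A)
    (h1 : ∀ i, algebraMap A B (a i) ∈ nonZeroDivisors B)
    (h2 : ∀ i, Ideal.map (algebraMap A B) (M i + Ideal.span {a i})
        = Ideal.span {algebraMap A B (a i)}) :
    ∃ ψ : ↥(dilatation M a) →ₐ[A] B,
      (∀ ψ' : ↥(dilatation M a) →ₐ[A] B, ψ' = ψ) ∧
      ∀ (x : ↥(dilatation M a)) (ν : I →₀ ℕ) (l : A), l ∈ Lpow M a ν →
        (x : Localization (dilSubmonoid a)) = Localization.mk l ⟨apow a ν, apow_mem a ν⟩ →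
        algebraMap A B (apow a ν) * ψ x = algebraMap A B l := by
  classical
  set S := dilSubmonoid a with hSdef
  set χ := algebraMap A B with hχ
  set S' : Submonoid B := Submonoid.map (χ : A →* B) S with hS'def
  have hS'nzd : S' ≤ nonZeroDivisors B := by
    rintro _ ⟨s, hs, rfl⟩
    revert hs
    have : S ≤ Submonoid.comap (χ : A →* B) (nonZeroDivisors B) := by
      rw [hSdef, dilSubmonoid, Submonoid.closure_le]
      rintro _ ⟨i, rfl⟩
      exact h1 i
    exact fun hs => this hs
  set T := Localization S' with hT
  have hle : S ≤ S'.comap χ := fun s hs => ⟨s, hs, rfl⟩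
  set f : Localization S →+* T := IsLocalization.map T χ hle with hf
  have hinj : Function.Injective (algebraMap B T) := IsLocalization.injective _ hS'nzd
  have hfmk : ∀ (l s : A) (hs : s ∈ S),
      f (Localization.mk l ⟨s, hs⟩)
        = Localization.mk (χ l) ⟨χ s, hle hs⟩ := by
    intro l s hs
    rw [Localization.mk_eq_mk'_apply, Localization.mk_eq_mk'_apply, hf,
      IsLocalization.map_mk']
  set fA : Localization S →ₐ[A] T :=
    { f with commutes' := fun r => IsLocalization.map_eq hle r } with hfA
  -- the B-cancel computation
  have hBcalc : ∀ (s : A) (hs : s ∈ S) (b : B),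
      algebraMap B T (χ s * b) = Localization.mk (χ s * b) 1 ∧ True := fun s hs b =>
    ⟨(Localization.mk_one_eq_algebraMap _).symm, trivial⟩
  -- key: f maps dilatation into the range of algebraMap B T
  have hrange : dilatation M a ≤
      Subalgebra.comap fA (IsScalarTower.toAlgHom A B T).range := by
    rw [dilatation]
    apply Algebra.adjoin_le
    rintro y hy
    simp only [Set.mem_iUnion, Set.mem_image] at hy
    obtain ⟨i, m, hm, rfl⟩ := hy
    have hχm : χ m ∈ Ideal.span {χ (a i)} := by
      rw [← h2 i]
      exact Ideal.mem_map_of_mem _ (Submodule.mem_sup_left hm)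
    rw [Ideal.mem_span_singleton] at hχm
    obtain ⟨b, hb⟩ := hχm
    refine ⟨b, ?_⟩
    show algebraMap B T b = fA (dilFrac a i m)
    have : fA (dilFrac a i m) = Localization.mk (χ m) ⟨χ (a i), hle (a_mem_dilSubmonoid a i)⟩ :=
      hfmk m (a i) (a_mem_dilSubmonoid a i)
    rw [this, hb, mk_cancel_aux (χ (a i)) (hle (a_mem_dilSubmonoid a i)) b, Localization.mk_one_eq_algebraMap]
  set e : B ≃ₐ[A] (IsScalarTower.toAlgHom A B T).range :=
    AlgEquiv.ofInjective _ hinj with he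
  set ψ : ↥(dilatation M a) →ₐ[A] B :=
    e.symm.toAlgHom.comp (AlgHom.codRestrict (fA.comp (dilatation M a).val) _
      (fun x => hrange x.2)) with hψ
  have hkey : ∀ x : ↥(dilatation M a), algebraMap B T (ψ x) = f (x : Localization S) := by
    intro x
    have h1' : e (ψ x) = ⟨fA (x : Localization S), hrange x.2⟩ := by
      simp only [hψ, AlgHom.coe_comp, Function.comp_apply, AlgEquiv.toAlgHom_eq_coe,
        AlgHom.coe_coe]
      exact e.apply_symm_apply _
    have h2' : ((e (ψ x)) : T) = algebraMap B T (ψ x) := rfl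
    rw [← h2', h1']
    rfl
  have hmain : ∀ (x : ↥(dilatation M a)) (s : A) (hs : s ∈ S) (l : A),
      (x : Localization S) = Localization.mk l ⟨s, hs⟩ →
      χ s * ψ x = χ l := by
    intro x s hs l hx
    apply hinj
    rw [map_mul, hkey, hx, hfmk, ← Localization.mk_one_eq_algebraMap,
      ← Localization.mk_one_eq_algebraMap, Localization.mk_mul, one_mul,
      mk_cancel_aux (χ s) (hle hs) (χ l)]
  refine ⟨ψ, ?_, fun x ν l _ hx => hmain x _ (apow_mem a ν) l hx⟩
  intro ψ'
  have huniq : ∀ (y : Localization S) (hy : y ∈ dilatation M a),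
      ψ' ⟨y, hy⟩ = ψ ⟨y, hy⟩ := by
    intro y hy
    have hy' : y ∈ Algebra.adjoin A (⋃ i, dilFrac a i '' (M i)) := hy
    induction hy' using Algebra.adjoin_induction with
    | mem z hz =>
      simp only [Set.mem_iUnion, Set.mem_image] at hz
      obtain ⟨i, m, hm, rfl⟩ := hz
      have hmemz : dilFrac a i m ∈ dilatation M a := hy
      set ξ : ↥(dilatation M a) := ⟨dilFrac a i m, hmemz⟩ with hξ
      have hmul : algebraMap A ↥(dilatation M a) (a i) * ξ = algebraMap A _ m := by
        apply Subtype.ext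
        show algebraMap A (Localization S) (a i) * dilFrac a i m
            = algebraMap A (Localization S) m
        rw [dilFrac, ← Localization.mk_one_eq_algebraMap, ← Localization.mk_one_eq_algebraMap,
          Localization.mk_mul, one_mul, mk_cancel_aux]
      have key : ∀ φ : ↥(dilatation M a) →ₐ[A] B, χ (a i) * φ ξ = χ m := by
        intro φ
        have := congrArg φ hmul
        rwa [map_mul, AlgHom.commutes, AlgHom.commutes] at this
      have := (key ψ').trans (key ψ).symm
      exact (mul_cancel_left_mem_nonZeroDivisors (h1 i)).mp this
    | algebraMap r =>
      have : (⟨algebraMap A (Localization S) r, hy⟩ : ↥(dilatation M a))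
          = algebraMap A _ r := rfl
      rw [this, AlgHom.commutes, AlgHom.commutes]
    | add u v hu hv ihu ihv =>
      have : (⟨u + v, hy⟩ : ↥(dilatation M a)) = ⟨u, hu⟩ + ⟨v, hv⟩ := rfl
      rw [this, map_add, map_add, ihu hu, ihv hv]
    | mul u v hu hv ihu ihv =>
      have : (⟨u * v, hy⟩ : ↥(dilatation M a)) = ⟨u, hu⟩ * ⟨v, hv⟩ := rfl
      rw [this, map_mul, map_mul, ihu hu, ihv hv]
  exact AlgHom.ext fun x => by obtain ⟨y, hy⟩ := x; exact huniq y hy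
end
end

section
/- For a finite index set I = {1,...,k}, there is a unique A-algebra isomorphism A[{M_i/a_i}_{i∈I}] ≅ A[N/(a_1⋯a_k)] where N is the ideal Σ_{i∈I} M_i·∏_{j≠i}(a_j), i.e. a multi-centered dilatation over a finite index set is a mono-centered dilatation. -/
open scoped TensorProduct

noncomputable section

variable {A : Type*} [CommRing A] {I : Type*}

namespace Stmt12Aux

variable [Fintype I] [DecidableEq I]

/-- The complement `∏_{j ≠ i} a_j`. -/
def c (a : I → A) (i : I) : A := ∏ j ∈ Finset.univ.erase i, a j

lemma a_mul_c (a : I → A) (i : I) : a i * c a i = ∏ j, a j :=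
  Finset.mul_prod_erase _ _ (Finset.mem_univ i)

lemma b_mem_S (a : I → A) : (∏ j, a j) ∈ dilSubmonoid a :=
  Submonoid.prod_mem _ fun i _ => a_mem_dilSubmonoid a i

lemma b_mem_T (a : I → A) : (∏ j, a j) ∈ dilSubmonoid (fun _ : Unit => ∏ j, a j) :=
  a_mem_dilSubmonoid _ ()

lemma T_le_S (a : I → A) : dilSubmonoid (fun _ : Unit => ∏ j, a j) ≤ dilSubmonoid a :=
  Submonoid.closure_le.2 (by rintro _ ⟨i, rfl⟩; exact b_mem_S a)

lemma exists_mul_mem (a : I → A) :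
    ∀ x ∈ dilSubmonoid a, ∃ m : A, m * x ∈ dilSubmonoid (fun _ : Unit => ∏ j, a j) := by
  intro x hx
  induction hx using Submonoid.closure_induction with
  | mem x hx =>
      obtain ⟨i, rfl⟩ := hx
      exact ⟨c a i, by rw [mul_comm, a_mul_c]; exact b_mem_T a⟩
  | one => exact ⟨1, by simpa using Submonoid.one_mem _⟩
  | mul x y hx hy ihx ihy =>
      obtain ⟨mx, h1⟩ := ihx
      obtain ⟨my, h2⟩ := ihy
      exact ⟨mx * my, by rw [mul_mul_mul_comm]; exact Submonoid.mul_mem _ h1 h2⟩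

lemma isLoc (a : I → A) :
    IsLocalization (dilSubmonoid a)
      (Localization (dilSubmonoid (fun _ : Unit => ∏ j, a j))) :=
  IsLocalization.isLocalization_of_is_exists_mul_mem
    (S := Localization (dilSubmonoid (fun _ : Unit => ∏ j, a j)))
    (dilSubmonoid (fun _ : Unit => ∏ j, a j)) (dilSubmonoid a) (T_le_S a)
    (fun x => exists_mul_mem a x.1 x.2)

/-- The canonical `A`-algebra isomorphism between the two localizations. -/
def ψ (a : I → A) :
    Localization (dilSubmonoid a) ≃ₐ[A]
      Localization (dilSubmonoid (fun _ : Unit => ∏ j, a j)) :=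
  haveI := isLoc a
  Localization.algEquiv (dilSubmonoid a) _

lemma mk_b_eq (a : I → A) (m : A) :
    Localization.mk (m * ∏ j, a j) (⟨∏ j, a j, b_mem_T a⟩ :
        dilSubmonoid (fun _ : Unit => ∏ j, a j)) = algebraMap A _ m := by
  rw [← Localization.mk_one_eq_algebraMap]
  calc Localization.mk (m * ∏ j, a j) (⟨∏ j, a j, b_mem_T a⟩ :
          dilSubmonoid (fun _ : Unit => ∏ j, a j))
      = Localization.mk (∏ j, a j) ⟨∏ j, a j, b_mem_T a⟩ * Localization.mk m 1 := by
        rw [Localization.mk_mul, mul_one, mul_comm]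
    _ = Localization.mk m 1 := by
        have h1 : Localization.mk (∏ j, a j) (⟨∏ j, a j, b_mem_T a⟩ :
            dilSubmonoid (fun _ : Unit => ∏ j, a j)) = 1 :=
          Localization.mk_self ⟨∏ j, a j, b_mem_T a⟩
        rw [h1, one_mul]

lemma psi_dilFrac (a : I → A) (i : I) (m : A) :
    ψ a (dilFrac a i m) = dilFrac (fun _ : Unit => ∏ j, a j) () (m * c a i) := by
  haveI := isLoc a
  rw [ψ, dilFrac, Localization.algEquiv_mk, eq_comm, IsLocalization.eq_mk'_iff_mul_eq]
  show Localization.mk (m * c a i) ⟨∏ j, a j, _⟩ * _ = _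
  rw [← Localization.mk_one_eq_algebraMap, Localization.mk_mul, mul_one]
  rw [show m * c a i * a i = m * ∏ j, a j by rw [mul_assoc, mul_comm (c a i), a_mul_c]]
  exact mk_b_eq a m

/-- `n ↦ n / b` as an `A`-linear map. -/
def fLin (a : I → A) :
    A →ₗ[A] Localization (dilSubmonoid (fun _ : Unit => ∏ j, a j)) where
  toFun n := Localization.mk n ⟨∏ j, a j, b_mem_T a⟩
  map_add' _ _ := (Localization.add_mk_self _ _ _).symm
  map_smul' r x := by simp [Localization.smul_mk, smul_eq_mul]

lemma fLin_eq_dilFrac (a : I → A) (n : A) :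
    fLin a n = dilFrac (fun _ : Unit => ∏ j, a j) () n := rfl

lemma a_isUnit (a : I → A) (i : I) :
    IsUnit (algebraMap A (Localization (dilSubmonoid (fun _ : Unit => ∏ j, a j))) (a i)) :=
  haveI := isLoc a
  IsLocalization.map_units (M := dilSubmonoid a) _ ⟨a i, a_mem_dilSubmonoid a i⟩

end Stmt12Aux

open Stmt12Aux in
/-- for a finite index set, the multi-centered dilatation is, via a unique
`A`-algebra isomorphism, the mono-centered dilatation with center
`[Σ_i M_i·∏_{j≠i}(a_j), a_1⋯a_k]`. -/
theorem stmt12 [Fintype I] [DecidableEq I] (M : I → Ideal A) (a : I → A) :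
    ∃ e : ↥(dilatation M a) ≃ₐ[A]
        ↥(dilatation
            (fun _ : Unit => ∑ i, M i * Ideal.span {∏ j ∈ Finset.univ.erase i, a j})
            (fun _ : Unit => ∏ i, a i)),
      ∀ e', e' = e := by
  classical
  haveI := isLoc a
  have hmap : (dilatation M a).map ((ψ a : _ →ₐ[A] _)) =
      dilatation
        (fun _ : Unit => ∑ i, M i * Ideal.span {∏ j ∈ Finset.univ.erase i, a j})
        (fun _ : Unit => ∏ i, a i) := by
    rw [dilatation, AlgHom.map_adjoin]
    apply le_antisymm
    · apply Algebra.adjoin_le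
      rintro _ ⟨x, hx, rfl⟩
      rw [Set.mem_iUnion] at hx
      obtain ⟨i, m, hm, rfl⟩ := hx
      show ψ a (dilFrac a i m) ∈ _
      rw [psi_dilFrac]
      apply Algebra.subset_adjoin
      refine Set.mem_iUnion.2 ⟨(), ⟨m * c a i, ?_, rfl⟩⟩
      have hle : M i * Ideal.span {c a i} ≤
          ∑ i, M i * Ideal.span {∏ j ∈ Finset.univ.erase i, a j} :=
        Finset.single_le_sum
          (f := fun i => M i * Ideal.span {∏ j ∈ Finset.univ.erase i, a j})
          (fun _ _ => zero_le) (Finset.mem_univ i)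
      exact hle (Ideal.mul_mem_mul hm (Ideal.mem_span_singleton_self _))
    · apply Algebra.adjoin_le
      intro x hx
      rw [Set.mem_iUnion] at hx
      obtain ⟨_, n, hn, rfl⟩ := hx
      have key : (∑ i, M i * Ideal.span {∏ j ∈ Finset.univ.erase i, a j}) ≤
          Submodule.comap (fLin a)
            (Subalgebra.toSubmodule
              (Algebra.adjoin A ((ψ a : _ →ₐ[A] _) '' ⋃ i, dilFrac a i '' (M i)))) := by
        rw [Ideal.sum_eq_sup]
        apply Finset.sup_le
        intro i _
        rw [Ideal.mul_le]
        intro m hm x hxx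
        obtain ⟨r, rfl⟩ := Ideal.mem_span_singleton'.1 hxx
        simp only [Submodule.mem_comap]
        rw [show m * (r * ∏ j ∈ Finset.univ.erase i, a j) = r • (m * c a i) by
          simp [c, smul_eq_mul]; ring, map_smul]
        refine Submodule.smul_mem _ r ?_
        show fLin a (m * c a i) ∈ Algebra.adjoin A _
        rw [fLin_eq_dilFrac, ← psi_dilFrac]
        exact Algebra.subset_adjoin ⟨_, Set.mem_iUnion.2 ⟨i, ⟨m, hm, rfl⟩⟩, rfl⟩
      exact key hn
  refine ⟨((ψ a).subalgebraMap (dilatation M a)).trans (Subalgebra.equivOfEq _ _ hmap), ?_⟩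
  intro e'
  set E := ((ψ a).subalgebraMap (dilatation M a)).trans (Subalgebra.equivOfEq _ _ hmap) with hE
  have huniq : ∀ f g : ↥(dilatation M a) →ₐ[A]
      ↥(dilatation
          (fun _ : Unit => ∑ i, M i * Ideal.span {∏ j ∈ Finset.univ.erase i, a j})
          (fun _ : Unit => ∏ i, a i)), f = g := by
    intro f g
    apply AlgHom.ext
    rintro ⟨v, hv⟩
    induction hv using Algebra.adjoin_induction with
    | mem x hx =>
        rw [Set.mem_iUnion] at hx
        obtain ⟨i, m, hm, rfl⟩ := hx
        set x₀ : ↥(dilatation M a) :=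
          ⟨dilFrac a i m, Algebra.subset_adjoin (Set.mem_iUnion.2 ⟨i, ⟨m, hm, rfl⟩⟩)⟩
        have hxe : algebraMap A ↥(dilatation M a) (a i) * x₀ = algebraMap A _ m := by
          apply Subtype.ext
          show algebraMap A (Localization (dilSubmonoid a)) (a i) * dilFrac a i m
            = algebraMap A _ m
          rw [dilFrac, Localization.mk_eq_mk'_apply]
          exact IsLocalization.mk'_spec' _ m ⟨a i, a_mem_dilSubmonoid a i⟩
        have hf := congrArg f hxe
        rw [map_mul, AlgHom.commutes, AlgHom.commutes] at hf
        have hg := congrArg g hxe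
        rw [map_mul, AlgHom.commutes, AlgHom.commutes] at hg
        show f x₀ = g x₀
        have hf' : algebraMap A
              (Localization (dilSubmonoid (fun _ : Unit => ∏ j, a j))) (a i) * (f x₀ : _)
            = algebraMap A _ m := by
          have h2 := congrArg Subtype.val hf
          exact h2
        have hg' : algebraMap A
              (Localization (dilSubmonoid (fun _ : Unit => ∏ j, a j))) (a i) * (g x₀ : _)
            = algebraMap A _ m := by
          have h2 := congrArg Subtype.val hg
          exact h2
        exact Subtype.ext ((a_isUnit a i).mul_left_cancel (hf'.trans hg'.symm))
    | algebraMap r =>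
        show f (algebraMap A ↥(dilatation M a) r) = g (algebraMap A ↥(dilatation M a) r)
        rw [AlgHom.commutes, AlgHom.commutes]
    | add x y hx hy ihx ihy =>
        show f (⟨x, hx⟩ + ⟨y, hy⟩) = g (⟨x, hx⟩ + ⟨y, hy⟩)
        rw [map_add, map_add, ihx, ihy]
    | mul x y hx hy ihx ihy =>
        show f (⟨x, hx⟩ * ⟨y, hy⟩) = g (⟨x, hx⟩ * ⟨y, hy⟩)
        rw [map_mul, map_mul, ihx, ihy]
  exact AlgEquiv.ext fun x => AlgHom.congr_fun (huniq e'.toAlgHom E.toAlgHom) x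

end
end

section
/- Let I = {i} be a singleton and suppose the image of a_i in A/M_i is a non-zero-divisor. Then there exists a unique A-algebra morphism φ : A[M_i/a_i] → A/M_i, and its kernel is the ideal of A[M_i/a_i] generated by the fractions {m/a_i : m ∈ M_i}. -/
open scoped TensorProduct

noncomputable section

variable {A : Type*} [CommRing A] {I : Type*}

namespace Stmt15

variable (M : Ideal A) (a : A)

lemma le_comap : dilSubmonoid (fun _ : Unit => a) ≤
    (Submonoid.powers (Ideal.Quotient.mk M a)).comap (Ideal.Quotient.mk M) := by
  refine Submonoid.closure_le.2 ?_
  rintro _ ⟨i, rfl⟩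
  exact Submonoid.mem_powers _

def f : Localization (dilSubmonoid fun _ : Unit => a) →+*
    Localization (Submonoid.powers (Ideal.Quotient.mk M a)) :=
  IsLocalization.map _ (Ideal.Quotient.mk M) (le_comap M a)

lemma f_mk (m : A) (s : dilSubmonoid fun _ : Unit => a) :
    f M a (Localization.mk m s) =
      Localization.mk (Ideal.Quotient.mk M m) ⟨Ideal.Quotient.mk M s, le_comap M a s.2⟩ := by
  rw [Localization.mk_eq_mk', Localization.mk_eq_mk', f, IsLocalization.map_mk']

lemma f_algebraMap (r : A) :
    f M a (algebraMap A _ r) = algebraMap (A ⧸ M) _ (Ideal.Quotient.mk M r) :=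
  IsLocalization.map_eq _ _

lemma f_gen {m : A} (hm : m ∈ M) : f M a (dilFrac (fun _ : Unit => a) () m) = 0 := by
  rw [dilFrac, f_mk, Ideal.Quotient.eq_zero_iff_mem.2 hm, Localization.mk_zero]

lemma j_inj (h : Ideal.Quotient.mk M a ∈ nonZeroDivisors (A ⧸ M)) :
    Function.Injective
      (algebraMap (A ⧸ M) (Localization (Submonoid.powers (Ideal.Quotient.mk M a)))) :=
  have hle : Submonoid.powers (Ideal.Quotient.mk M a) ≤ nonZeroDivisors (A ⧸ M) :=
    fun x hx => by obtain ⟨n, rfl⟩ := hx; exact pow_mem h n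
  IsLocalization.injective (M := Submonoid.powers (Ideal.Quotient.mk M a))
    (Localization (Submonoid.powers (Ideal.Quotient.mk M a))) hle

lemma loc_mul (m : A) :
    algebraMap A (Localization (dilSubmonoid fun _ : Unit => a)) a *
      dilFrac (fun _ : Unit => a) () m = algebraMap A _ m := by
  rw [← Localization.mk_one_eq_algebraMap, ← Localization.mk_one_eq_algebraMap, dilFrac,
    Localization.mk_mul, Localization.mk_eq_mk_iff, Localization.r_iff_exists]
  refine ⟨1, ?_⟩
  push_cast
  ring

lemma frac_mem {m : A} (hm : m ∈ M) :
    dilFrac (fun _ : Unit => a) () m ∈ dilatation (fun _ : Unit => M) (fun _ : Unit => a) :=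
  Algebra.subset_adjoin (Set.mem_iUnion.2 ⟨(), Set.mem_image_of_mem _ hm⟩)

lemma mem_range {x : Localization (dilSubmonoid fun _ : Unit => a)}
    (hx : x ∈ dilatation (fun _ : Unit => M) (fun _ : Unit => a)) :
    f M a x ∈ (algebraMap (A ⧸ M)
      (Localization (Submonoid.powers (Ideal.Quotient.mk M a)))).range := by
  have hx' : x ∈ Algebra.adjoin A
      (⋃ i : Unit, dilFrac (fun _ : Unit => a) i '' (M : Set A)) := hx
  clear hx
  induction hx' using Algebra.adjoin_induction with
  | mem z hz =>
    simp only [Set.mem_iUnion, Set.mem_image] at hz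
    obtain ⟨i, m, hm, rfl⟩ := hz
    rw [f_gen M a hm]
    exact zero_mem _
  | algebraMap r => exact ⟨_, (f_algebraMap M a r).symm⟩
  | add x y _ _ hx hy => rw [map_add]; exact add_mem hx hy
  | mul x y _ _ hx hy => rw [map_mul]; exact mul_mem hx hy

def φfun (x : ↥(dilatation (fun _ : Unit => M) (fun _ : Unit => a))) : A ⧸ M :=
  (mem_range M a x.2).choose

lemma φfun_spec (x : ↥(dilatation (fun _ : Unit => M) (fun _ : Unit => a))) :
    algebraMap (A ⧸ M) (Localization (Submonoid.powers (Ideal.Quotient.mk M a))) (φfun M a x)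
      = f M a ↑x :=
  (mem_range M a x.2).choose_spec

set_option maxHeartbeats 1000000 in
def φ (h : Ideal.Quotient.mk M a ∈ nonZeroDivisors (A ⧸ M)) : ↥(dilatation (fun _ : Unit => M) (fun _ : Unit => a)) →ₐ[A] A ⧸ M where
  toFun := φfun M a
  map_one' := j_inj M a h <| by
    rw [φfun_spec, map_one]
    exact map_one (f M a)
  map_mul' x y := j_inj M a h <| by
    rw [φfun_spec, map_mul, φfun_spec, φfun_spec]
    exact map_mul (f M a) _ _
  map_zero' := j_inj M a h <| by
    rw [φfun_spec, map_zero]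
    exact map_zero (f M a)
  map_add' x y := j_inj M a h <| by
    rw [φfun_spec, map_add, φfun_spec, φfun_spec]
    exact map_add (f M a) _ _
  commutes' r := j_inj M a h <| by
    rw [φfun_spec]
    exact (f_algebraMap M a r).trans rfl

lemma φ_spec (h : Ideal.Quotient.mk M a ∈ nonZeroDivisors (A ⧸ M)) (x : ↥(dilatation (fun _ : Unit => M) (fun _ : Unit => a))) :
    algebraMap (A ⧸ M) (Localization (Submonoid.powers (Ideal.Quotient.mk M a))) (φ M a h x)
      = f M a ↑x :=
  φfun_spec M a x

lemma dil_induction {p : ↥(dilatation (fun _ : Unit => M) (fun _ : Unit => a)) → Prop}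
    (mem : ∀ (m : A) (_ : m ∈ M) (hx), p ⟨dilFrac (fun _ : Unit => a) () m, hx⟩)
    (alg : ∀ r : A, p (algebraMap A _ r))
    (add : ∀ x y, p x → p y → p (x + y))
    (mul : ∀ x y, p x → p y → p (x * y)) (x) : p x := by
  obtain ⟨z, hz⟩ := x
  have hz' : z ∈ Algebra.adjoin A
      (⋃ i : Unit, dilFrac (fun _ : Unit => a) i '' (M : Set A)) := hz
  suffices hs : ∀ hw, p ⟨z, hw⟩ from hs hz
  clear hz
  induction hz' using Algebra.adjoin_induction with
  | mem w hw =>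
    simp only [Set.mem_iUnion, Set.mem_image] at hw
    obtain ⟨i, m, hm, rfl⟩ := hw
    exact fun hx => mem m hm hx
  | algebraMap r => exact fun _ => alg r
  | add x y hx hy px py =>
    exact fun hw => add ⟨x, hx⟩ ⟨y, hy⟩ (px hx) (py hy)
  | mul x y hx hy px py =>
    exact fun hw => mul ⟨x, hx⟩ ⟨y, hy⟩ (px hx) (py hy)


lemma apply_eq_zero (h : Ideal.Quotient.mk M a ∈ nonZeroDivisors (A ⧸ M)) (φ' : ↥(dilatation (fun _ : Unit => M) (fun _ : Unit => a)) →ₐ[A] A ⧸ M)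
    {x : ↥(dilatation (fun _ : Unit => M) (fun _ : Unit => a))} {m : A} (hm : m ∈ M)
    (hx : (x : Localization (dilSubmonoid fun _ : Unit => a))
      = dilFrac (fun _ : Unit => a) () m) : φ' x = 0 := by
  have heq : algebraMap A (dilatation (fun _ : Unit => M) (fun _ : Unit => a)) a * x
      = algebraMap A _ m := by
    apply Subtype.ext
    show algebraMap A (Localization (dilSubmonoid fun _ : Unit => a)) a * ↑x = algebraMap A _ m
    rw [hx]
    exact loc_mul a m
  have h2 := congrArg φ' heq
  rw [map_mul, AlgHom.commutes, AlgHom.commutes, Ideal.Quotient.algebraMap_eq,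
    Ideal.Quotient.eq_zero_iff_mem.2 hm] at h2
  exact h.2 _ (by rw [mul_comm]; exact h2)

lemma phi_unique (h : Ideal.Quotient.mk M a ∈ nonZeroDivisors (A ⧸ M)) (φ' : ↥(dilatation (fun _ : Unit => M) (fun _ : Unit => a)) →ₐ[A] A ⧸ M) :
    φ' = φ M a h := by
  ext x
  refine dil_induction M a (p := fun x => φ' x = φ M a h x) ?_ ?_ ?_ ?_ x
  · intro m hm hx
    rw [apply_eq_zero M a h φ' hm rfl, apply_eq_zero M a h (φ M a h) hm rfl]
  · intro r
    rw [AlgHom.commutes, AlgHom.commutes]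
  · intro x y hx hy
    rw [map_add, map_add, hx, hy]
  · intro x y hx hy
    rw [map_mul, map_mul, hx, hy]

set_option maxHeartbeats 1000000 in
set_option synthInstance.maxHeartbeats 200000 in
lemma decomp (x : ↥(dilatation (fun _ : Unit => M) (fun _ : Unit => a))) :
    ∃ c : A, x - algebraMap A _ c ∈ Ideal.span
      {x : ↥(dilatation (fun _ : Unit => M) (fun _ : Unit => a)) | ∃ m ∈ M,
        (x : Localization (dilSubmonoid fun _ : Unit => a))
          = dilFrac (fun _ : Unit => a) () m} := by
  refine dil_induction M a (p := fun x => ∃ c : A, x - algebraMap A _ c ∈ Ideal.span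
      {x : ↥(dilatation (fun _ : Unit => M) (fun _ : Unit => a)) | ∃ m ∈ M,
        (x : Localization (dilSubmonoid fun _ : Unit => a))
          = dilFrac (fun _ : Unit => a) () m}) ?_ ?_ ?_ ?_ x
  · intro m hm hx
    refine ⟨0, ?_⟩
    rw [map_zero, sub_zero]
    exact Ideal.subset_span ⟨m, hm, rfl⟩
  · intro r
    exact ⟨r, by rw [sub_self]; exact zero_mem _⟩
  · rintro x y ⟨c, hc⟩ ⟨d, hd⟩
    refine ⟨c + d, ?_⟩
    have he : x + y - algebraMap A _ (c + d)
        = (x - algebraMap A _ c) + (y - algebraMap A _ d) := by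
      rw [map_add]; ring
    rw [he]
    exact add_mem hc hd
  · rintro x y ⟨c, hc⟩ ⟨d, hd⟩
    refine ⟨c * d, ?_⟩
    have he : x * y - algebraMap A _ (c * d)
        = x * (y - algebraMap A _ d) + (x - algebraMap A _ c) * algebraMap A _ d := by
      rw [map_mul]; ring
    rw [he]
    exact add_mem (Ideal.mul_mem_left _ _ hd) (Ideal.mul_mem_right _ _ hc)

lemma algebraMap_mem_span {c : A} (hc : c ∈ M) :
    algebraMap A (dilatation (fun _ : Unit => M) (fun _ : Unit => a)) c ∈ Ideal.span
      {x : ↥(dilatation (fun _ : Unit => M) (fun _ : Unit => a)) | ∃ m ∈ M,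
        (x : Localization (dilSubmonoid fun _ : Unit => a))
          = dilFrac (fun _ : Unit => a) () m} := by
  have he : algebraMap A (dilatation (fun _ : Unit => M) (fun _ : Unit => a)) c
      = algebraMap A _ a * ⟨dilFrac (fun _ : Unit => a) () c, frac_mem M a hc⟩ :=
    Subtype.ext (loc_mul a c).symm
  rw [he]
  exact Ideal.mul_mem_left _ _ (Ideal.subset_span ⟨c, hc, rfl⟩)

end Stmt15

/-- for a mono-center `[M, a]` with `a` a non-zero-divisor mod `M`, there is a
unique `A`-algebra morphism `φ : A[M/a] → A/M`, and its kernel is the ideal generated by the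
fractions `{m/a : m ∈ M}`. -/
theorem stmt15 (M : Ideal A) (a : A)
    (h : Ideal.Quotient.mk M a ∈ nonZeroDivisors (A ⧸ M)) :
    ∃ φ : ↥(dilatation (fun _ : Unit => M) (fun _ : Unit => a)) →ₐ[A] A ⧸ M,
      (∀ φ', φ' = φ) ∧
      RingHom.ker φ = Ideal.span
        {x : ↥(dilatation (fun _ : Unit => M) (fun _ : Unit => a)) | ∃ m ∈ M,
          (x : Localization (dilSubmonoid fun _ : Unit => a))
            = dilFrac (fun _ : Unit => a) () m} := by
  refine ⟨Stmt15.φ M a h, fun φ' => Stmt15.phi_unique M a h φ', ?_⟩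
  have hJ : Ideal.span
      {x : ↥(dilatation (fun _ : Unit => M) (fun _ : Unit => a)) | ∃ m ∈ M,
        (x : Localization (dilSubmonoid fun _ : Unit => a))
          = dilFrac (fun _ : Unit => a) () m} ≤ RingHom.ker (Stmt15.φ M a h) := by
    refine Ideal.span_le.2 ?_
    rintro y ⟨m, hm, hym⟩
    exact RingHom.mem_ker.2 (Stmt15.apply_eq_zero M a h _ hm hym)
  refine le_antisymm ?_ hJ
  intro x hx0
  obtain ⟨c, hc⟩ := Stmt15.decomp M a x
  have h1 : Stmt15.φ M a h (x - algebraMap A _ c) = 0 := hJ hc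
  rw [map_sub, RingHom.mem_ker.1 hx0, AlgHom.commutes, zero_sub, neg_eq_zero,
    Ideal.Quotient.algebraMap_eq] at h1
  have hcM : c ∈ M := Ideal.Quotient.eq_zero_iff_mem.1 h1
  have := add_mem hc (Stmt15.algebraMap_mem_span M a hcM)
  rwa [sub_add_cancel] at this
end
end

section
/- Localizing the dilatation recovers the localization: if S ⊆ A is the multiplicative set generated by {a_i}_{i∈I} and S' the multiplicative set of A[{M_i/a_i}_{i∈I}] consisting of the images of the a^ν, then S'⁻¹(A[{M_i/a_i}_{i∈I}]) ≅ S⁻¹A canonically as A-algebras. -/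
open scoped TensorProduct

noncomputable section

variable {A : Type*} [CommRing A] {I : Type*}

set_option synthInstance.maxHeartbeats 1000000
set_option maxHeartbeats 1000000


/-- localizing the dilatation at the images of the `a^ν` recovers the
localization `S⁻¹A`, compatibly with the maps from `A`. -/
theorem stmt16 (M : I → Ideal A) (a : I → A) :
    ∃ e : Localization
          (Submonoid.closure (Set.range fun i => algebraMap A ↥(dilatation M a) (a i)))
        ≃+* Localization (dilSubmonoid a),
      ∀ c : A,
        e (algebraMap ↥(dilatation M a)
            (Localization (Submonoid.closure
              (Set.range fun i => algebraMap A ↥(dilatation M a) (a i))))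
            (algebraMap A ↥(dilatation M a) c))
          = algebraMap A (Localization (dilSubmonoid a)) c := by
  set D := dilatation M a with hD
  set S' : Submonoid ↥D :=
    Submonoid.closure (Set.range fun i => algebraMap A ↥D (a i)) with hS'
  have hcoe : ∀ c : A, ((algebraMap A ↥D c : ↥D) : Localization (dilSubmonoid a))
      = algebraMap A (Localization (dilSubmonoid a)) c := fun c => rfl
  have hmap : ∀ x : A, x ∈ dilSubmonoid a → algebraMap A ↥D x ∈ S' := by
    intro x hx
    have : (dilSubmonoid a).map ((algebraMap A ↥D) : A →* ↥D) ≤ S' := by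
      rw [Submonoid.map_le_iff_le_comap]
      show Submonoid.closure (Set.range a) ≤ _
      apply Submonoid.closure_le.2
      rintro _ ⟨i, rfl⟩
      exact Submonoid.subset_closure ⟨i, rfl⟩
    exact this (Submonoid.mem_map_of_mem _ hx)
  haveI : IsLocalization S' (Localization (dilSubmonoid a)) := by
    constructor
    constructor
    · intro s
      have : ∀ s ∈ S', IsUnit ((s : ↥D) : Localization (dilSubmonoid a)) := by
        intro s hs
        induction hs using Submonoid.closure_induction with
        | mem x hx =>
          obtain ⟨i, rfl⟩ := hx
          rw [hcoe]
          exact IsLocalization.map_units _ (⟨a i, a_mem_dilSubmonoid a i⟩ : dilSubmonoid a)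
        | one => simp
        | mul x y _ _ hx hy => rw [Subalgebra.coe_mul]; exact hx.mul hy
      exact this s s.2
    · intro z
      obtain ⟨⟨m, s⟩, h⟩ := IsLocalization.surj (dilSubmonoid a) z
      refine ⟨⟨algebraMap A ↥D m, ⟨algebraMap A ↥D (s : A), hmap _ s.2⟩⟩, ?_⟩
      simpa [hcoe] using h
    · intro x y h
      refine ⟨1, ?_⟩
      have : (x : Localization (dilSubmonoid a)) = y := h
      simpa using Subtype.ext this
  refine ⟨(IsLocalization.algEquiv S' (Localization S')
      (Localization (dilSubmonoid a))).toRingEquiv, fun c => ?_⟩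
  have := (IsLocalization.algEquiv S' (Localization S')
      (Localization (dilSubmonoid a))).commutes (algebraMap A ↥D c)
  exact this.trans (hcoe c)
end
end

section
/- Let a, g_1, …, g_n be a regular sequence in a commutative ring A and let d_1, …, d_n be positive integers. Then the dilatation A[(g_1)/a^{d_1}, …, (g_n)/a^{d_n}] is isomorphic as an A-algebra to A[x_1,…,x_n]/(g_1 − a^{d_1}x_1, …, g_n − a^{d_n}x_n); in particular the latter quotient ring has no a-power torsion. -/
open scoped TensorProduct

noncomputable section

variable {A : Type*} [CommRing A] {I : Type*}

set_option synthInstance.maxHeartbeats 1000000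
set_option maxHeartbeats 1000000


/-- The ideal generated by the elements of the sequence `a, g_1, …, g_n` preceding index `k`. -/
def prevIdeal (n : ℕ) (a : A) (g : Fin n → A) (k : Fin (n + 1)) : Ideal A :=
  Ideal.span {x | ∃ j, j < k ∧ x = Fin.cases a g j}

/-- The ideal of relations `(g_1 − a^{d_1}x_1, …, g_n − a^{d_n}x_n)`. -/
def relIdeal (n : ℕ) (a : A) (g : Fin n → A) (d : Fin n → ℕ) :
    Ideal (MvPolynomial (Fin n) A) :=
  Ideal.span (Set.range fun i =>
    MvPolynomial.C (g i) - MvPolynomial.C (a ^ d i) * MvPolynomial.X i)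

section Aux

open MvPolynomial

variable {A : Type*} [CommRing A]

/-- The ideal generated by the first `k` relations. -/
def Jideal (n : ℕ) (a : A) (g : Fin n → A) (d : Fin n → ℕ) (k : ℕ) :
    Ideal (MvPolynomial (Fin n) A) :=
  Ideal.span {x | ∃ i : Fin n, (i : ℕ) < k ∧
    x = MvPolynomial.C (g i) - MvPolynomial.C (a ^ d i) * MvPolynomial.X i}

lemma relIdeal_eq_Jideal (n : ℕ) (a : A) (g : Fin n → A) (d : Fin n → ℕ) :
    relIdeal n a g d = Jideal n a g d n := by
  unfold relIdeal Jideal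
  congr 1
  ext x
  constructor
  · rintro ⟨i, rfl⟩; exact ⟨i, i.isLt, rfl⟩
  · rintro ⟨i, _, rfl⟩; exact ⟨i, rfl⟩

lemma Jideal_zero (n : ℕ) (a : A) (g : Fin n → A) (d : Fin n → ℕ) :
    Jideal n a g d 0 = ⊥ := by
  unfold Jideal
  convert Ideal.span_empty
  ext x
  simp

lemma Jideal_succ (n : ℕ) (a : A) (g : Fin n → A) (d : Fin n → ℕ) {k : ℕ} (hk : k < n) :
    Jideal n a g d (k + 1) = Jideal n a g d k ⊔
      Ideal.span {MvPolynomial.C (g ⟨k, hk⟩) -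
        MvPolynomial.C (a ^ d ⟨k, hk⟩) * MvPolynomial.X ⟨k, hk⟩} := by
  unfold Jideal
  rw [← Ideal.span_union]
  congr 1
  ext x
  constructor
  · rintro ⟨i, hi, rfl⟩
    rcases Nat.lt_succ_iff_lt_or_eq.mp hi with h | h
    · exact Or.inl ⟨i, h, rfl⟩
    · right
      have : i = ⟨k, hk⟩ := Fin.ext h
      subst this
      rfl
  · rintro (⟨i, hi, rfl⟩ | h)
    · exact ⟨i, Nat.lt_succ_of_lt hi, rfl⟩
    · rw [Set.mem_singleton_iff] at h
      exact ⟨⟨k, hk⟩, Nat.lt_succ_self k, h⟩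

variable {n : ℕ} {a : A} {g : Fin n → A} {d : Fin n → ℕ}

lemma reg' (hreg : ∀ k : Fin (n + 1),
      Ideal.Quotient.mk (prevIdeal n a g k) (Fin.cases a g k)
        ∈ nonZeroDivisors (A ⧸ prevIdeal n a g k))
    (k : Fin (n + 1)) (x : A) (hx : Fin.cases a g k * x ∈ prevIdeal n a g k) :
    x ∈ prevIdeal n a g k := by
  have h0 : (Ideal.Quotient.mk (prevIdeal n a g k)) x = 0 := by
    apply mem_nonZeroDivisors_iff_right.mp (hreg k)
    rw [← map_mul, mul_comm]
    exact Ideal.Quotient.eq_zero_iff_mem.mpr hx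
  exact Ideal.Quotient.eq_zero_iff_mem.mp h0

lemma prevIdeal_zero : prevIdeal n a g 0 = ⊥ := by
  unfold prevIdeal
  convert Ideal.span_empty
  ext x
  simp only [Set.mem_setOf_eq, Set.mem_empty_iff_false, iff_false, not_exists]
  rintro j ⟨hj, _⟩
  exact absurd hj (Fin.not_lt_zero j)

lemma a_nzd (hreg : ∀ k : Fin (n + 1),
      Ideal.Quotient.mk (prevIdeal n a g k) (Fin.cases a g k)
        ∈ nonZeroDivisors (A ⧸ prevIdeal n a g k)) :
    a ∈ nonZeroDivisors A := by
  rw [mem_nonZeroDivisors_iff_right]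
  intro x hx
  have hmem : Fin.cases (motive := fun _ => A) a g 0 * x ∈ prevIdeal n a g 0 := by
    rw [prevIdeal_zero, Ideal.mem_bot, Fin.cases_zero, mul_comm]
    exact hx
  have := reg' hreg 0 x hmem
  rwa [prevIdeal_zero, Ideal.mem_bot] at this

lemma a_mem_prev {k : ℕ} (hk : k < n) :
    a ∈ prevIdeal n a g ⟨k + 1, by omega⟩ := by
  apply Ideal.subset_span
  refine ⟨0, ?_, ?_⟩
  · simp [Fin.lt_def]
  · simp

lemma g_mem_prev {k : ℕ} (hk : k < n) {i : Fin n} (hi : (i : ℕ) < k) :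
    g i ∈ prevIdeal n a g ⟨k + 1, by omega⟩ := by
  apply Ideal.subset_span
  refine ⟨Fin.succ i, ?_, ?_⟩
  · simp only [Fin.lt_def, Fin.val_succ]; omega
  · simp

lemma pow_eq_mul_pred {m : ℕ} (hm : 0 < m) : a ^ m = a * a ^ (m - 1) := by
  rw [← pow_succ']
  congr 1
  omega

lemma mapC_prev (hd : ∀ i, 0 < d i) {k : ℕ} (hk : k < n) :
    Ideal.map (MvPolynomial.C : A →+* MvPolynomial (Fin n) A)
        (prevIdeal n a g ⟨k + 1, by omega⟩) =
      Jideal n a g d k ⊔ Ideal.span {MvPolynomial.C a} := by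
  apply le_antisymm
  · rw [prevIdeal, Ideal.map_span, Ideal.span_le]
    rintro x ⟨y, ⟨j, hj, rfl⟩, rfl⟩
    induction j using Fin.cases with
    | zero =>
      simp only [Fin.cases_zero]
      exact Ideal.mem_sup_right (Ideal.subset_span rfl)
    | succ i =>
      simp only [Fin.cases_succ]
      have hik : (i : ℕ) < k := by
        rw [Fin.lt_def] at hj
        simpa using hj
      have key : (MvPolynomial.C (g i) : MvPolynomial (Fin n) A) =
          (MvPolynomial.C (g i) - MvPolynomial.C (a ^ d i) * MvPolynomial.X i) +
          MvPolynomial.C a * (MvPolynomial.C (a ^ (d i - 1)) * MvPolynomial.X i) := by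
        rw [pow_eq_mul_pred (hd i), map_mul]
        ring
      rw [key]
      exact Ideal.add_mem _
        (Ideal.mem_sup_left (Ideal.subset_span ⟨i, hik, rfl⟩))
        (Ideal.mem_sup_right (Ideal.mul_mem_right _ _ (Ideal.subset_span rfl)))
  · apply sup_le
    · rw [Jideal, Ideal.span_le]
      rintro x ⟨i, hi, rfl⟩
      apply Ideal.sub_mem
      · exact Ideal.mem_map_of_mem _ (g_mem_prev hk hi)
      · have key : (MvPolynomial.C (a ^ d i) * MvPolynomial.X i : MvPolynomial (Fin n) A) =
            MvPolynomial.C a * (MvPolynomial.C (a ^ (d i - 1)) * MvPolynomial.X i) := by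
          rw [pow_eq_mul_pred (hd i), map_mul]
          ring
        rw [key]
        exact Ideal.mul_mem_right _ _ (Ideal.mem_map_of_mem _ (a_mem_prev hk))
    · rw [Ideal.span_le]
      rintro x rfl
      exact Ideal.mem_map_of_mem _ (a_mem_prev hk)

/-- Main lemma: `C a` is a non-zero-divisor modulo `Jideal k`. -/
lemma Ca_nzd_mod_J (hd : ∀ i, 0 < d i)
    (hreg : ∀ k : Fin (n + 1),
      Ideal.Quotient.mk (prevIdeal n a g k) (Fin.cases a g k)
        ∈ nonZeroDivisors (A ⧸ prevIdeal n a g k)) :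
    ∀ k : ℕ, k ≤ n → ∀ p : MvPolynomial (Fin n) A,
      MvPolynomial.C a * p ∈ Jideal n a g d k → p ∈ Jideal n a g d k := by
  intro k
  induction k with
  | zero =>
    intro _ p hp
    rw [Jideal_zero, Ideal.mem_bot] at hp ⊢
    have ha := a_nzd hreg
    ext m
    have h := congrArg (MvPolynomial.coeff m) hp
    rw [MvPolynomial.coeff_C_mul, MvPolynomial.coeff_zero] at h
    rw [MvPolynomial.coeff_zero]
    exact mem_nonZeroDivisors_iff_right.mp ha _ (by rwa [mul_comm])
  | succ k ih =>
    intro hkn p hp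
    have hk : k < n := hkn
    set fk : MvPolynomial (Fin n) A :=
      MvPolynomial.C (g ⟨k, hk⟩) - MvPolynomial.C (a ^ d ⟨k, hk⟩) * MvPolynomial.X ⟨k, hk⟩
      with hfk
    rw [Jideal_succ n a g d hk] at hp
    obtain ⟨r, hr, z, hz, hrz⟩ := Submodule.mem_sup.mp hp
    obtain ⟨q, rfl⟩ := Ideal.mem_span_singleton'.mp hz
    have hcast : (Fin.cases (motive := fun _ => A) a g ⟨k + 1, by omega⟩) = g ⟨k, hk⟩ := by
      have h0 : (⟨k + 1, by omega⟩ : Fin (n + 1)) = Fin.succ ⟨k, hk⟩ := rfl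
      rw [h0, Fin.cases_succ]
    -- q * C (g k) lies in (Jideal k) + (C a)
    have hmem : q * MvPolynomial.C (g ⟨k, hk⟩) ∈
        Jideal n a g d k ⊔ Ideal.span {MvPolynomial.C a} := by
      have key : q * MvPolynomial.C (g ⟨k, hk⟩) =
          MvPolynomial.C a *
            (p + q * (MvPolynomial.C (a ^ (d ⟨k, hk⟩ - 1)) * MvPolynomial.X ⟨k, hk⟩))
          - r := by
        have h2 : MvPolynomial.C a * p = r + q * fk := hrz.symm
        rw [hfk] at h2
        have h1' : (MvPolynomial.C (a ^ d ⟨k, hk⟩) : MvPolynomial (Fin n) A) =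
            MvPolynomial.C a * MvPolynomial.C (a ^ (d ⟨k, hk⟩ - 1)) := by
          rw [pow_eq_mul_pred (a := a) (hd ⟨k, hk⟩), map_mul]
        linear_combination -h2 + (q * MvPolynomial.X ⟨k, hk⟩) * h1'
      rw [key]
      exact Ideal.sub_mem _
        (Ideal.mem_sup_right (Ideal.mul_mem_right _ _ (Ideal.subset_span rfl)))
        (Ideal.mem_sup_left hr)
    rw [← mapC_prev hd hk] at hmem
    have hq : q ∈ Jideal n a g d k ⊔ Ideal.span {MvPolynomial.C a} := by
      rw [← mapC_prev hd hk]
      rw [MvPolynomial.mem_map_C_iff] at hmem ⊢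
      intro m
      have h := hmem m
      rw [mul_comm, MvPolynomial.coeff_C_mul] at h
      apply reg' hreg ⟨k + 1, by omega⟩
      rwa [hcast]
    obtain ⟨s, hs, t, ht, hst⟩ := Submodule.mem_sup.mp hq
    obtain ⟨q', rfl⟩ := Ideal.mem_span_singleton'.mp ht
    have hfin : MvPolynomial.C a * (p - q' * fk) ∈ Jideal n a g d k := by
      have key : MvPolynomial.C a * (p - q' * fk) = r + s * fk := by
        have h2 : MvPolynomial.C a * p = r + (s + q' * MvPolynomial.C a) * fk := by
          rw [hst, ← hrz]
        linear_combination h2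
      rw [key]
      exact Ideal.add_mem _ hr (Ideal.mul_mem_right _ _ hs)
    have hp' := ih (le_of_lt hk) _ hfin
    rw [Jideal_succ n a g d hk]
    have hdecomp : p = (p - q' * fk) + q' * fk := by ring
    rw [hdecomp]
    exact Ideal.add_mem _ (Ideal.mem_sup_left hp')
      (Ideal.mem_sup_right (Ideal.mul_mem_left _ _ (Ideal.subset_span rfl)))

lemma Ca_pow_nzd (hd : ∀ i, 0 < d i)
    (hreg : ∀ k : Fin (n + 1),
      Ideal.Quotient.mk (prevIdeal n a g k) (Fin.cases a g k)
        ∈ nonZeroDivisors (A ⧸ prevIdeal n a g k))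
    (m : ℕ) (p : MvPolynomial (Fin n) A)
    (hp : (MvPolynomial.C a) ^ m * p ∈ relIdeal n a g d) : p ∈ relIdeal n a g d := by
  induction m with
  | zero => rwa [pow_zero, one_mul] at hp
  | succ m ih =>
    apply ih
    rw [relIdeal_eq_Jideal] at hp ⊢
    apply Ca_nzd_mod_J hd hreg n le_rfl
    rwa [pow_succ, mul_comm ((MvPolynomial.C a) ^ m), mul_assoc] at hp

lemma exists_clear (n : ℕ) (a : A) (g : Fin n → A) (d : Fin n → ℕ)
    (F : MvPolynomial (Fin n) A) :
    ∃ (N : ℕ) (h : A), (MvPolynomial.C a) ^ N * F - MvPolynomial.C h ∈ relIdeal n a g d := by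
  induction F using MvPolynomial.induction_on with
  | C c => exact ⟨0, c, by simp⟩
  | add p q hp hq =>
    obtain ⟨N₁, h₁, hm₁⟩ := hp
    obtain ⟨N₂, h₂, hm₂⟩ := hq
    refine ⟨N₁ + N₂, a ^ N₂ * h₁ + a ^ N₁ * h₂, ?_⟩
    have key : (MvPolynomial.C a) ^ (N₁ + N₂) * (p + q)
          - MvPolynomial.C (a ^ N₂ * h₁ + a ^ N₁ * h₂) =
        (MvPolynomial.C a) ^ N₂ * ((MvPolynomial.C a) ^ N₁ * p - MvPolynomial.C h₁)
          + (MvPolynomial.C a) ^ N₁ *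
            ((MvPolynomial.C a) ^ N₂ * q - MvPolynomial.C h₂) := by
      rw [map_add, map_mul, map_mul, map_pow, map_pow, pow_add]
      ring
    rw [key]
    exact Ideal.add_mem _ (Ideal.mul_mem_left _ _ hm₁) (Ideal.mul_mem_left _ _ hm₂)
  | mul_X p i hp =>
    obtain ⟨N, h, hm⟩ := hp
    refine ⟨N + d i, h * g i, ?_⟩
    have key : (MvPolynomial.C a) ^ (N + d i) * (p * MvPolynomial.X i)
          - MvPolynomial.C (h * g i) =
        (MvPolynomial.C (a ^ d i) * MvPolynomial.X i) *
            ((MvPolynomial.C a) ^ N * p - MvPolynomial.C h)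
          - MvPolynomial.C h *
            (MvPolynomial.C (g i) - MvPolynomial.C (a ^ d i) * MvPolynomial.X i) := by
      rw [map_mul, map_pow, pow_add]
      ring
    rw [key]
    exact Ideal.sub_mem _ (Ideal.mul_mem_left _ _ hm)
      (Ideal.mul_mem_left _ _ (Ideal.subset_span ⟨i, rfl⟩))

/-- The evaluation map sending `x_i` to `g_i / a^{d_i}`. -/
def phiMap (n : ℕ) (a : A) (g : Fin n → A) (d : Fin n → ℕ) :
    MvPolynomial (Fin n) A →ₐ[A]
      Localization (dilSubmonoid (fun i : Fin n => a ^ d i)) :=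
  MvPolynomial.aeval (fun i => dilFrac (fun i : Fin n => a ^ d i) i (g i))

lemma dilSubmonoid_le_nzd (ha : a ∈ nonZeroDivisors A) :
    dilSubmonoid (fun i : Fin n => a ^ d i) ≤ nonZeroDivisors A := by
  rw [dilSubmonoid, Submonoid.closure_le]
  rintro x ⟨i, rfl⟩
  exact pow_mem ha _

lemma phiMap_zero_of_mem_rel {x : MvPolynomial (Fin n) A} (hx : x ∈ relIdeal n a g d) :
    phiMap n a g d x = 0 := by
  have hle : relIdeal n a g d ≤ RingHom.ker (phiMap n a g d) := by
    rw [relIdeal, Ideal.span_le]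
    rintro y ⟨i, rfl⟩
    rw [SetLike.mem_coe, RingHom.mem_ker]
    simp only [phiMap, map_sub, map_mul, MvPolynomial.aeval_C, MvPolynomial.aeval_X]
    rw [dilFrac, Localization.mk_eq_mk'_apply]
    exact sub_eq_zero_of_eq (IsLocalization.mk'_spec'
      (Localization (dilSubmonoid fun i : Fin n => a ^ d i)) (g i)
      ⟨a ^ d i, a_mem_dilSubmonoid (fun i : Fin n => a ^ d i) i⟩).symm
  exact hle hx

lemma ker_phiMap (hd : ∀ i, 0 < d i)
    (hreg : ∀ k : Fin (n + 1),
      Ideal.Quotient.mk (prevIdeal n a g k) (Fin.cases a g k)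
        ∈ nonZeroDivisors (A ⧸ prevIdeal n a g k)) :
    RingHom.ker (phiMap n a g d) = relIdeal n a g d := by
  apply le_antisymm
  · intro x hx
    rw [RingHom.mem_ker] at hx
    obtain ⟨N, h, hNh⟩ := exists_clear n a g d x
    have h1 : phiMap n a g d ((MvPolynomial.C a) ^ N * x - MvPolynomial.C h) = 0 :=
      phiMap_zero_of_mem_rel hNh
    rw [map_sub, map_mul, map_pow] at h1
    have hCx : phiMap n a g d x = 0 := hx
    rw [hCx, mul_zero, zero_sub, neg_eq_zero] at h1
    have hCh : phiMap n a g d (MvPolynomial.C h) =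
        algebraMap A (Localization (dilSubmonoid (fun i : Fin n => a ^ d i))) h := by
      simp [phiMap]
    rw [hCh] at h1
    have hh : h = 0 := by
      have hinj := IsLocalization.injective
        (Localization (dilSubmonoid (fun i : Fin n => a ^ d i)))
        (dilSubmonoid_le_nzd (d := d) (a_nzd hreg))
      apply hinj
      rw [h1, map_zero]
    rw [hh, map_zero, sub_zero] at hNh
    exact Ca_pow_nzd hd hreg N x hNh
  · intro x hx
    rw [RingHom.mem_ker]
    exact phiMap_zero_of_mem_rel hx

lemma range_phiMap :
    (phiMap n a g d).range =
      dilatation (fun i => Ideal.span {g i}) (fun i : Fin n => a ^ d i) := by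
  rw [phiMap, ← Algebra.adjoin_range_eq_range_aeval, dilatation]
  apply le_antisymm
  · apply Algebra.adjoin_mono
    rintro x ⟨i, rfl⟩
    exact Set.mem_iUnion.mpr ⟨i, ⟨g i, Ideal.subset_span rfl, rfl⟩⟩
  · apply Algebra.adjoin_le
    rintro x hx
    rw [Set.mem_iUnion] at hx
    obtain ⟨i, m, hm, rfl⟩ := hx
    obtain ⟨c, rfl⟩ := Ideal.mem_span_singleton'.mp hm
    have key : dilFrac (fun i : Fin n => a ^ d i) i (c * g i) =
        algebraMap A (Localization (dilSubmonoid (fun i : Fin n => a ^ d i))) c *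
          dilFrac (fun i : Fin n => a ^ d i) i (g i) := by
      rw [dilFrac, dilFrac, ← Localization.mk_one_eq_algebraMap, Localization.mk_mul,
        one_mul]
    rw [key]
    exact mul_mem (Subalgebra.algebraMap_mem _ c)
      (Algebra.subset_adjoin (Set.mem_range_self i))

end Aux


/-- if `a, g_1, …, g_n` is a regular sequence (each term a non-zero-divisor
modulo the ideal generated by the previous ones) and the `d_i` are positive, then
`A[(g_1)/a^{d_1}, …, (g_n)/a^{d_n}] ≅ A[x_1,…,x_n]/(g_i − a^{d_i}x_i)` as `A`-algebras; in
particular the latter has no `a`-power torsion. -/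
theorem stmt17 (n : ℕ) (a : A) (g : Fin n → A) (d : Fin n → ℕ) (hd : ∀ i, 0 < d i)
    (hreg : ∀ k : Fin (n + 1),
      Ideal.Quotient.mk (prevIdeal n a g k) (Fin.cases a g k)
        ∈ nonZeroDivisors (A ⧸ prevIdeal n a g k)) :
    Nonempty ((MvPolynomial (Fin n) A ⧸ relIdeal n a g d)
      ≃ₐ[A] ↥(dilatation (fun i => Ideal.span {g i}) (fun i => a ^ d i))) ∧
    ∀ x : MvPolynomial (Fin n) A ⧸ relIdeal n a g d,
      (∃ k : ℕ, algebraMap A _ (a ^ k) * x = 0) → x = 0 := by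
  constructor
  · exact ⟨(Ideal.quotientEquivAlgOfEq A (ker_phiMap hd hreg).symm).trans
      ((Ideal.quotientKerEquivRange (phiMap n a g d)).trans
        (Subalgebra.equivOfEq _ _ range_phiMap))⟩
  · rintro x ⟨k, hk⟩
    obtain ⟨F, rfl⟩ := Ideal.Quotient.mk_surjective x
    have halg : (algebraMap A (MvPolynomial (Fin n) A ⧸ relIdeal n a g d)) (a ^ k) =
        Ideal.Quotient.mk (relIdeal n a g d) (MvPolynomial.C (a ^ k)) := by
      rw [← MvPolynomial.algebraMap_eq, Ideal.Quotient.mk_algebraMap]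
    rw [halg, ← map_mul] at hk
    have hmem : MvPolynomial.C (a ^ k) * F ∈ relIdeal n a g d :=
      Ideal.Quotient.eq_zero_iff_mem.mp hk
    rw [map_pow] at hmem
    exact Ideal.Quotient.eq_zero_iff_mem.mpr (Ca_pow_nzd hd hreg k F hmem)
end
end

section
/- In the polynomial ring P = A[T, X_1, …, X_n] over a commutative ring A, with d_1,…,d_n ∈ ℕ, there is a canonical A-algebra isomorphism P[x_1,…,x_n]/(X_1 − T^{d_1}x_1, …, X_n − T^{d_n}x_n) ≅ P[(X_1)/T^{d_1}, …, (X_n)/T^{d_n}]. -/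
open scoped TensorProduct

noncomputable section

variable {A : Type*} [CommRing A] {I : Type*}

set_option synthInstance.maxHeartbeats 1000000
set_option maxHeartbeats 1000000


/-- The ideal of relations `(X_1 − T^{d_1}x_1, …, X_n − T^{d_n}x_n)` in
`P[x_1,…,x_n]`, where `P = A[T, X_1, …, X_n]` with `T = X none`, `X_i = X (some i)`. -/
def relIdealP (n : ℕ) (d : Fin n → ℕ) :
    Ideal (MvPolynomial (Fin n) (MvPolynomial (Option (Fin n)) A)) :=
  Ideal.span (Set.range fun i =>
    MvPolynomial.C (MvPolynomial.X (Option.some i))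
      - MvPolynomial.C (MvPolynomial.X Option.none ^ d i) * MvPolynomial.X i)


namespace Stmt18Aux
open MvPolynomial

variable {A : Type*} [CommRing A]

lemma X_mem_nzd {σ : Type*} (s : σ) :
    (X s : MvPolynomial σ A) ∈ nonZeroDivisors (MvPolynomial σ A) := by
  rw [mem_nonZeroDivisors_iff_right]
  intro z hz
  ext m
  have h := coeff_mul_X m s z
  rw [hz] at h
  simpa using h.symm

variable (A) in
abbrev aa (n : ℕ) (d : Fin n → ℕ) : Fin n → MvPolynomial (Option (Fin n)) A :=
  fun i => X Option.none ^ d i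

variable (n : ℕ) (d : Fin n → ℕ)

lemma key (i : Fin n) (m : MvPolynomial (Option (Fin n)) A) :
    algebraMap _ (Localization (dilSubmonoid (aa A n d))) (aa A n d i)
        * dilFrac (aa A n d) i m = algebraMap _ _ m := by
  rw [← Localization.mk_one_eq_algebraMap, ← Localization.mk_one_eq_algebraMap, dilFrac,
    Localization.mk_mul, Localization.mk_eq_mk_iff, Localization.r_iff_exists]
  exact ⟨1, by push_cast; ring⟩

lemma dilFrac_mul (i : Fin n) (p m : MvPolynomial (Option (Fin n)) A) :
    dilFrac (aa A n d) i (p * m)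
      = algebraMap _ (Localization (dilSubmonoid (aa A n d))) p * dilFrac (aa A n d) i m := by
  rw [dilFrac, dilFrac, ← Localization.mk_one_eq_algebraMap, Localization.mk_mul, one_mul]

end Stmt18Aux
namespace Stmt18Aux
open MvPolynomial

variable {A : Type*} [CommRing A] (n : ℕ) (d : Fin n → ℕ)

/-- substitution `T ↦ T`, `X_i ↦ T^{d_i} X_i` on `P`. -/
def uu : MvPolynomial (Option (Fin n)) A →+* MvPolynomial (Option (Fin n)) A :=
  eval₂Hom C (fun o => o.elim (X Option.none) (fun i => X Option.none ^ d i * X (Option.some i)))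

/-- `T ↦ T`, `X_i ↦ X_i/T^{d_i}` from `P` to the localization. -/
def ψ : MvPolynomial (Option (Fin n)) A →+* Localization (dilSubmonoid (aa A n d)) :=
  eval₂Hom ((algebraMap (MvPolynomial (Option (Fin n)) A)
      (Localization (dilSubmonoid (aa A n d)))).comp
        (C : A →+* MvPolynomial (Option (Fin n)) A))
    (fun o => o.elim
      (algebraMap (MvPolynomial (Option (Fin n)) A)
        (Localization (dilSubmonoid (aa A n d))) (X Option.none))
      (fun i => dilFrac (aa A n d) i (X (Option.some i))))

/-- `x_i ↦ X_i/T^{d_i}` over `P`. -/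
def φ : MvPolynomial (Fin n) (MvPolynomial (Option (Fin n)) A)
    →ₐ[MvPolynomial (Option (Fin n)) A] Localization (dilSubmonoid (aa A n d)) :=
  aeval (fun i => dilFrac (aa A n d) i (X (Option.some i)))

def α : MvPolynomial (Fin n) (MvPolynomial (Option (Fin n)) A)
    →+* MvPolynomial (Option (Fin n)) A :=
  eval₂Hom (uu (A := A) n d) (fun i => X (Option.some i))

variable (A) in
def β : MvPolynomial (Option (Fin n)) A
    →+* MvPolynomial (Fin n) (MvPolynomial (Option (Fin n)) A) :=
  eval₂Hom ((C : MvPolynomial (Option (Fin n)) A →+*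
      MvPolynomial (Fin n) (MvPolynomial (Option (Fin n)) A)).comp
        (C : A →+* MvPolynomial (Option (Fin n)) A))
    (fun o => o.elim (C (X Option.none)) (fun i => X i))

lemma ψ_comp_uu : (ψ (A := A) n d).comp (uu (A := A) n d)
    = algebraMap (MvPolynomial (Option (Fin n)) A)
        (Localization (dilSubmonoid (aa A n d))) := by
  apply MvPolynomial.ringHom_ext
  · intro a
    simp [ψ, uu, algebraMap_eq]
  · rintro (_ | i)
    · simp [ψ, uu]
    · simp only [RingHom.comp_apply, uu, ψ, eval₂Hom_X', Option.elim, map_mul, map_pow]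
      have := key n d i (X (Option.some i) : MvPolynomial (Option (Fin n)) A)
      simpa [aa] using this

lemma ψ_comp_α : (ψ (A := A) n d).comp (α (A := A) n d) = (φ (A := A) n d).toRingHom := by
  apply MvPolynomial.ringHom_ext
  · intro p
    have := congrFun (congrArg (fun f => f.toFun) (ψ_comp_uu n d)) p
    simp only [RingHom.comp_apply, α, eval₂Hom_C] at *
    simpa [φ, aeval_C] using this
  · intro i
    simp [α, ψ, φ]

set_option maxHeartbeats 4000000 in
lemma mk_β_α : (Ideal.Quotient.mk (relIdealP (A := A) n d)).comp ((β A n).comp (α (A := A) n d))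
    = Ideal.Quotient.mk (relIdealP (A := A) n d) := by
  apply MvPolynomial.ringHom_ext
  · intro p
    -- both sides are ring homs in p; do a second ext over P
    induction p using MvPolynomial.induction_on with
    | C a => simp [α, β, uu, algebraMap_eq]
    | add p q hp hq => simp only [map_add] at *; rw [hp, hq]
    | mul_X p o hp =>
      simp only [map_mul] at *
      rw [hp]
      refine congrArg ((Ideal.Quotient.mk (relIdealP (A := A) n d)) (C p) * ·) ?_
      cases o with
      | none => simp [α, β, uu]
      | some i =>
        simp only [RingHom.comp_apply, α, eval₂Hom_C, uu, eval₂Hom_X', Option.elim,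
          map_mul, map_pow, β]
        rw [← map_pow, ← map_mul, Ideal.Quotient.mk_eq_mk_iff_sub_mem]
        have : (C (X (Option.some i)) - C (X Option.none ^ d i) * X i :
            MvPolynomial (Fin n) (MvPolynomial (Option (Fin n)) A)) ∈ relIdealP (A := A) n d :=
          Ideal.subset_span ⟨i, rfl⟩
        have h2 := (relIdealP (A := A) n d).neg_mem this
        rw [neg_sub] at h2
        simpa [map_pow] using h2
  · intro i
    simp [α, β]

end Stmt18Aux
namespace Stmt18Aux
open MvPolynomial

variable {A : Type*} [CommRing A] (n : ℕ) (d : Fin n → ℕ)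

lemma exists_pow (f : MvPolynomial (Option (Fin n)) A) :
    ∃ (N : ℕ) (h : MvPolynomial (Option (Fin n)) A),
      uu (A := A) n d h = X Option.none ^ N * f := by
  induction f using MvPolynomial.induction_on with
  | C a => exact ⟨0, C a, by simp [uu]⟩
  | add p q hp hq =>
    obtain ⟨N1, h1, e1⟩ := hp
    obtain ⟨N2, h2, e2⟩ := hq
    refine ⟨N1 + N2, X Option.none ^ N2 * h1 + X Option.none ^ N1 * h2, ?_⟩
    have hu : uu (A := A) n d (X Option.none) = X Option.none := by simp [uu]
    rw [map_add, map_mul, map_mul, map_pow, map_pow, hu, e1, e2]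
    ring
  | mul_X p o hp =>
    obtain ⟨N, h, e⟩ := hp
    cases o with
    | none =>
      refine ⟨N, h * X Option.none, ?_⟩
      have hu : uu (A := A) n d (X Option.none) = X Option.none := by simp [uu]
      rw [map_mul, e, hu]
      ring
    | some i =>
      refine ⟨N + d i, h * X (Option.some i), ?_⟩
      have hu : uu (A := A) n d (X (Option.some i))
          = X Option.none ^ d i * X (Option.some i) := by simp [uu]
      rw [map_mul, e, hu]
      ring

lemma hS_le : dilSubmonoid (aa A n d)
    ≤ nonZeroDivisors (MvPolynomial (Option (Fin n)) A) := by
  rw [dilSubmonoid, Submonoid.closure_le]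
  rintro _ ⟨i, rfl⟩
  exact pow_mem (X_mem_nzd _) _

lemma ψ_inj : Function.Injective (ψ (A := A) n d) := by
  refine (injective_iff_map_eq_zero _).mpr ?_
  intro f hf
  obtain ⟨N, h, e⟩ := exists_pow n d f
  have hamap : Function.Injective (algebraMap (MvPolynomial (Option (Fin n)) A)
      (Localization (dilSubmonoid (aa A n d)))) :=
    IsLocalization.injective _ (hS_le n d)
  have h1 : algebraMap (MvPolynomial (Option (Fin n)) A)
      (Localization (dilSubmonoid (aa A n d))) h = 0 := by
    have h2 := congrArg (ψ (A := A) n d) e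
    rw [← RingHom.comp_apply, ψ_comp_uu, map_mul, map_pow, hf, mul_zero] at h2
    exact h2
  have h0 : h = 0 := hamap (by rw [h1, map_zero])
  rw [h0, map_zero] at e
  refine mem_nonZeroDivisors_iff_right.mp (pow_mem (X_mem_nzd (A := A) Option.none) N) f ?_
  rw [mul_comm, ← e]

lemma ker_φ : RingHom.ker (φ (A := A) n d) = relIdealP (A := A) n d := by
  apply le_antisymm
  · intro f hf
    have hφf : (φ (A := A) n d) f = 0 := hf
    have hαf : α (A := A) n d f = 0 := by
      apply ψ_inj n d
      rw [map_zero]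
      have h2 := congrArg (fun g : _ →+* _ => g f) (ψ_comp_α (A := A) n d)
      simp only [RingHom.comp_apply] at h2
      rw [h2]
      exact hφf
    have h3 := congrArg (fun g : _ →+* _ => g f) (mk_β_α (A := A) n d)
    simp only [RingHom.comp_apply, hαf, map_zero] at h3
    rw [← Ideal.Quotient.eq_zero_iff_mem]
    exact h3.symm
  · rw [relIdealP, Ideal.span_le]
    rintro _ ⟨i, rfl⟩
    simp only [SetLike.mem_coe, RingHom.mem_ker, map_sub, map_mul, φ, aeval_C, aeval_X]
    rw [sub_eq_zero]
    exact (key n d i (X (Option.some i))).symm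

lemma range_φ : (φ (A := A) n d).range
    = dilatation (fun i : Fin n =>
        Ideal.span {(X (Option.some i) : MvPolynomial (Option (Fin n)) A)}) (aa A n d) := by
  rw [dilatation]
  simp only [φ]
  rw [← Algebra.adjoin_range_eq_range_aeval]
  apply le_antisymm
  · apply Algebra.adjoin_mono
    rintro _ ⟨i, rfl⟩
    exact Set.mem_iUnion.mpr ⟨i, ⟨X (Option.some i), Ideal.mem_span_singleton_self _, rfl⟩⟩
  · rw [Algebra.adjoin_le_iff]
    intro x hx
    obtain ⟨i, m, hm, rfl⟩ := by
      simpa only [Set.mem_iUnion, Set.mem_image] using hx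
    obtain ⟨p, hp⟩ := Ideal.mem_span_singleton'.mp hm
    rw [← hp, dilFrac_mul]
    exact mul_mem (Subalgebra.algebraMap_mem _ p)
      (Algebra.subset_adjoin ⟨i, rfl⟩)

end Stmt18Aux
/-- in `P = A[T, X_1, …, X_n]` (with `T = X none`, `X_i = X (some i)`),
`P[x_1,…,x_n]/(X_i − T^{d_i}x_i) ≅ P[(X_1)/T^{d_1}, …, (X_n)/T^{d_n}]` canonically as
`P`-algebras. -/
theorem stmt18 (n : ℕ) (d : Fin n → ℕ) :
    Nonempty ((MvPolynomial (Fin n) (MvPolynomial (Option (Fin n)) A)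
        ⧸ relIdealP (A := A) n d)
      ≃ₐ[MvPolynomial (Option (Fin n)) A]
        ↥(dilatation
            (fun i : Fin n =>
              Ideal.span {(MvPolynomial.X (Option.some i) :
                MvPolynomial (Option (Fin n)) A)})
            (fun i => MvPolynomial.X Option.none ^ d i))) := by
  have hrange := Stmt18Aux.range_φ (A := A) n d
  let φ' := AlgHom.codRestrict (Stmt18Aux.φ (A := A) n d)
    (dilatation
      (fun i : Fin n =>
        Ideal.span {(MvPolynomial.X (Option.some i) : MvPolynomial (Option (Fin n)) A)})
      (fun i => MvPolynomial.X Option.none ^ d i))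
    (fun f => by rw [← hrange]; exact ⟨f, rfl⟩)
  have hsurj : Function.Surjective φ' := by
    rintro ⟨x, hx⟩
    rw [← hrange] at hx
    obtain ⟨f, hf⟩ := hx
    exact ⟨f, Subtype.ext hf⟩
  have hker : RingHom.ker φ' = relIdealP (A := A) n d := by
    rw [← Stmt18Aux.ker_φ n d]
    ext f
    simp only [RingHom.mem_ker]
    constructor
    · intro h
      have h2 := congrArg Subtype.val h
      simpa only [φ', AlgHom.coe_codRestrict, ZeroMemClass.coe_zero] using h2
    · intro h
      exact Subtype.ext (by simpa only [φ', AlgHom.coe_codRestrict,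
        ZeroMemClass.coe_zero] using h)
  exact ⟨(Ideal.quotientEquivAlgOfEq (MvPolynomial (Option (Fin n)) A) hker.symm).trans
    (Ideal.quotientKerAlgEquivOfSurjective hsurj)⟩
end
end
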